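/- arXiv:1107.3506 — 3 statements merged into one kernel-verified Lean document; each statement's English description precedes it below -/
import Mathlib

section
/- Let p/q ∈ (0,1) with p and q coprime. Then there exists a standard pair (u,v) such that ς(uv) = p/q. Moreover, for any such standard pair (u,v): |uv|₁ = p, |uv| = q, |u|·|v|₁ − |u|₁·|v| = 1, the words (uv)ⁿu and (vu)ⁿv are cyclically balanced for every n ≥ 0, and the word u²v² is not cyclically balanced. -/
open Filter Matrix Set Topology

noncomputable section

abbrev M2 : Type := Matrix (Fin 2) (Fin 2) ℝ

/-- A concrete (Frobenius) norm on 2×2 real matrices. -/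
def mnorm (A : M2) : ℝ := Real.sqrt (∑ i : Fin 2, ∑ j : Fin 2, (A i j) ^ 2)

/-- `𝒜(u) = A_{u_m} ⋯ A_{u_1}` for a finite word `u = (u_1, …, u_m)`. -/
def wordProd (A : Fin 2 → M2) (u : List (Fin 2)) : M2 := ((u.map A).reverse).prod

/-- `B_{x_n} ⋯ B_{x_1}` for an infinite word `x` (0-indexed). -/
def seqProd (A : Fin 2 → M2) (x : ℕ → Fin 2) (n : ℕ) : M2 :=
  wordProd A ((List.range n).map x)

/-- Joint spectral radius of a pair of matrices. -/
def jsr (A : Fin 2 → M2) : ℝ :=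
  limUnder atTop fun n : ℕ =>
    ⨆ u : Fin n → Fin 2, mnorm ((List.ofFn fun i => A (u i)).prod) ^ (1 / (n : ℝ))

/-- Spectral radius: maximum of the moduli of the complex eigenvalues. -/
def specRad (A : M2) : ℝ :=
  sSup ((fun z : ℂ => ‖z‖) '' spectrum ℂ (A.map fun x => (x : ℂ)))

/-- The pair `{A₀, α • A₁}`. -/
def pairα (A₀ A₁ : M2) (α : ℝ) : Fin 2 → M2 := ![A₀, α • A₁]

def jsrα (A₀ A₁ : M2) (α : ℝ) : ℝ := jsr (pairα A₀ A₁ α)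

def WeaklyExtremal (A : Fin 2 → M2) (x : ℕ → Fin 2) : Prop :=
  Tendsto (fun n : ℕ => mnorm (seqProd A x n) ^ (1 / (n : ℝ))) atTop (𝓝 (jsr A))

/-- The Sturmian set `X_γ`. -/
def Xset (γ : ℝ) : Set (ℕ → Fin 2) :=
  {x | ∃ δ : ℝ,
    (∀ n : ℕ, ((x n : ℕ) : ℤ) = ⌊γ * ((n : ℝ) + 1) + δ⌋ - ⌊γ * (n : ℝ) + δ⌋) ∨
    (∀ n : ℕ, ((x n : ℕ) : ℤ) = ⌈γ * ((n : ℝ) + 1) + δ⌉ - ⌈γ * (n : ℝ) + δ⌉)}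

/-- number of occurrences of the digit 1 in a word -/
def ones (u : List (Fin 2)) : ℕ := u.count 1

def BalancedWord (u : List (Fin 2)) : Prop :=
  ∀ v₁ v₂ : List (Fin 2), v₁ <:+: u → v₂ <:+: u → v₁.length = v₂.length →
    ((ones v₁ : ℤ) - (ones v₂ : ℤ)).natAbs ≤ 1

def CyclicallyBalanced (u : List (Fin 2)) : Prop :=
  ∀ a b : List (Fin 2), u = a ++ b → BalancedWord (b ++ a)

/-- the frequency of 1s in the infinite word `x` equals `γ` -/
def FreqOnes (x : ℕ → Fin 2) (γ : ℝ) : Prop :=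
  Tendsto (fun n : ℕ => ((((List.range n).map x).count 1 : ℕ) : ℝ) / (n : ℝ)) atTop (𝓝 γ)

structure TechnicalHyp (A₀ A₁ : M2) : Prop where
  nonneg₀ : ∀ i j, 0 ≤ A₀ i j
  nonneg₁ : ∀ i j, 0 ≤ A₁ i j
  invertible₀ : IsUnit A₀
  invertible₁ : IsUnit A₁
  posTrace₀ : 0 < A₀.trace
  posTrace₁ : 0 < A₁.trace
  noCommonInvariantSubspace : ∀ V : Submodule ℝ (Fin 2 → ℝ),
    (∀ v ∈ V, A₀.mulVec v ∈ V) → (∀ v ∈ V, A₁.mulVec v ∈ V) → V = ⊥ ∨ V = ⊤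
  posEntries : ∀ u : List (Fin 2), (0 : Fin 2) ∈ u → (1 : Fin 2) ∈ u →
    ∀ i j, 0 < wordProd ![A₀, A₁] u i j

structure SturmianHyp (A₀ A₁ : M2) (r : ℝ → ℝ) : Prop where
  mem_Icc : ∀ α : ℝ, 0 ≤ α → r α ∈ Set.Icc (0 : ℝ) 1
  sturmian_extremal : ∀ α : ℝ, 0 ≤ α → ∀ x ∈ Xset (r α), WeaklyExtremal (pairα A₀ A₁ α) x
  extremal_ratio : ∀ α : ℝ, 0 ≤ α → ∀ x : ℕ → Fin 2,
    WeaklyExtremal (pairα A₀ A₁ α) x → FreqOnes x (r α)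
  unbalanced_lt : ∀ α : ℝ, 0 ≤ α → ∀ u : List (Fin 2), ¬CyclicallyBalanced u →
    specRad (wordProd (pairα A₀ A₁ α) u) < jsrα A₀ A₁ α ^ u.length

def Diagonalisable (A : M2) : Prop :=
  ∃ P : M2, IsUnit P.det ∧ (P⁻¹ * A * P).IsDiag

inductive IsStandardPair : List (Fin 2) → List (Fin 2) → Prop
  | base : IsStandardPair [0] [1]
  | left : ∀ {u v}, IsStandardPair u v → IsStandardPair (u ++ v) v
  | right : ∀ {u v}, IsStandardPair u v → IsStandardPair u (v ++ u)

/-- `u^k`: the `k`-fold concatenation of the word `u`. -/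
def wpow (u : List (Fin 2)) (k : ℕ) : List (Fin 2) := (List.replicate k u).flatten

/-- the shift map `T` on infinite words -/
def shiftSeq (x : ℕ → Fin 2) : ℕ → Fin 2 := fun n => x (n + 1)

/-- the metric `d` on `Σ₂`: `2^{-m}` where `m` is the number of initial agreeing symbols. -/
def dSigma (x y : ℕ → Fin 2) : ℝ :=
  sInf {t : ℝ | ∃ m : ℕ, t = (2 : ℝ) ^ (-(m : ℤ)) ∧ ∀ j < m, x j = y j}

/-- the Euclidean norm on `ℝ²` -/
def enorm2 (v : Fin 2 → ℝ) : ℝ := Real.sqrt (v 0 ^ 2 + v 1 ^ 2)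

/-- height function: number of ones among the first `k` letters, as an integer -/
def hgt (w : List (Fin 2)) (k : ℕ) : ℤ := ((w.take k).count 1 : ℤ)

lemma hgt_append_le (u v : List (Fin 2)) {k : ℕ} (h : k ≤ u.length) :
    hgt (u ++ v) k = hgt u k := by
  unfold hgt; rw [List.take_append_of_le_length h]

lemma hgt_append_add (u v : List (Fin 2)) (j : ℕ) :
    hgt (u ++ v) (u.length + j) = (ones u : ℤ) + hgt v j := by
  unfold hgt ones; rw [List.take_length_add_append]; push_cast [List.count_append]; ring

lemma hgt_length (w : List (Fin 2)) : hgt w w.length = (ones w : ℤ) := by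
  unfold hgt ones; rw [List.take_length]

/-- interval-transfer arithmetic helper -/
lemma itrans {M W E E' lo hi lo' hi' k kmax r : ℤ}
    (hM : 1 ≤ M) (hW : 0 ≤ W) (hk : 0 ≤ k) (hkm : k ≤ kmax)
    (hE1 : lo ≤ E) (hE2 : E ≤ hi)
    (hid : M * E' = W * E + r - k)
    (hlo : M * lo' - M + 1 ≤ W * lo + r - kmax)
    (hhi : W * hi + r ≤ M * hi' + M - 1) :
    lo' ≤ E' ∧ E' ≤ hi' := by
  have h3 : W * lo ≤ W * E := mul_le_mul_of_nonneg_left hE1 hW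
  have h4 : W * E ≤ W * hi := mul_le_mul_of_nonneg_left hE2 hW
  constructor
  · by_contra hc
    push_neg at hc
    have h1 : E' ≤ lo' - 1 := by linarith [Int.lt_iff_add_one_le.mp hc]
    have h2 : M * E' ≤ M * (lo' - 1) := mul_le_mul_of_nonneg_left h1 (by linarith)
    linarith
  · by_contra hc
    push_neg at hc
    have h1 : hi' + 1 ≤ E' := Int.lt_iff_add_one_le.mp hc
    have h2 : M * (hi' + 1) ≤ M * E' := mul_le_mul_of_nonneg_left h1 (by linarith)
    linarith

/-- The key invariant for standard pairs. -/
theorem sp_inv {u v : List (Fin 2)} (h : IsStandardPair u v) :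
    0 < u.length ∧ 0 < v.length ∧
    (u.length : ℤ) * ones v = ones u * v.length + 1 ∧
    (∀ k ≤ u.length, -(ones u : ℤ) ≤ (u.length : ℤ) * hgt u k - k * ones u ∧
      (u.length : ℤ) * hgt u k - k * ones u ≤ (u.length : ℤ) - ones u - 1) ∧
    (∀ j ≤ v.length, 1 - (ones v : ℤ) ≤ (v.length : ℤ) * hgt v j - j * ones v ∧
      (v.length : ℤ) * hgt v j - j * ones v ≤ (v.length : ℤ) - ones v) := by
  induction h with
  | base =>
    refine ⟨by simp, by simp, by simp [ones], ?_, ?_⟩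
    · intro k hk
      simp only [List.length_singleton] at hk
      interval_cases k <;> simp [hgt, ones]
    · intro j hj
      simp only [List.length_singleton] at hj
      interval_cases j <;> simp [hgt, ones]
  | left h ih =>
    obtain ⟨hb, hd, hdet, hu, hv⟩ := ih
    rename_i u v
    set a : ℤ := (ones u : ℤ) with ha
    set b : ℤ := (u.length : ℤ) with hbz
    set c : ℤ := (ones v : ℤ) with hc
    set d : ℤ := (v.length : ℤ) with hdz
    have hb1 : 1 ≤ b := by simp only [hbz]; exact_mod_cast hb
    have hd1 : 1 ≤ d := by simp only [hdz]; exact_mod_cast hd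
    have hlen : ((u ++ v).length : ℤ) = b + d := by push_cast [List.length_append]; ring
    have hones : (ones (u ++ v) : ℤ) = a + c := by
      unfold ones; push_cast [List.count_append]; rfl
    refine ⟨by simp [List.length_append]; omega, hd,
      by rw [hlen, hones]; linear_combination hdet, ?_, hv⟩
    intro k hk
    rw [hlen, hones]
    by_cases hkb : k ≤ u.length
    · rw [hgt_append_le u v hkb]
      set X := hgt u k with hX
      have hkbz : (k : ℤ) ≤ b := by simp only [hbz]; exact_mod_cast hkb
      obtain ⟨hL, hU⟩ := hu k hkb
      rw [← hX] at hL hU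
      have hid : b * ((b + d) * X - (k : ℤ) * (a + c))
          = (b + d) * (b * X - (k : ℤ) * a) + 0 - (k : ℤ) := by
        linear_combination (-(k : ℤ)) * hdet
      have hlo : b * (-(a + c)) - b + 1 ≤ (b + d) * (-a) + 0 - b := by
        linarith [hdet]
      have hhi : (b + d) * (b - a - 1) + 0 ≤ b * ((b + d) - (a + c) - 1) + b - 1 := by
        linarith [hdet]
      exact itrans hb1 (by linarith) (by positivity) hkbz hL hU hid hlo hhi
    · push_neg at hkb
      obtain ⟨j, rfl⟩ : ∃ j, k = u.length + j := ⟨k - u.length, by omega⟩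
      have hjd : j ≤ v.length := by
        simp only [List.length_append] at hk; omega
      have hjdz : (j : ℤ) ≤ d := by simp only [hdz]; exact_mod_cast hjd
      rw [hgt_append_add u v j]
      rw [show ((u.length + j : ℕ) : ℤ) = b + (j : ℤ) by push_cast [hbz]; ring]
      rw [← ha]
      set Y := hgt v j with hY
      obtain ⟨hL, hU⟩ := hv j hjd
      rw [← hY] at hL hU
      have hid : d * ((b + d) * ((a : ℤ) + Y) - ((b : ℤ) + (j : ℤ)) * (a + c))
          = (b + d) * (d * Y - (j : ℤ) * c) + 0 - (d - (j : ℤ)) := by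
        linear_combination ((j : ℤ) - d) * hdet
      have hlo : d * (-(a + c)) - d + 1 ≤ (b + d) * (1 - c) + 0 - d := by
        linarith [hdet]
      have hhi : (b + d) * (d - c) + 0 ≤ d * ((b + d) - (a + c) - 1) + d - 1 := by
        linarith [hdet]
      have hk0 : (0 : ℤ) ≤ d - (j : ℤ) := by linarith
      have hkm : d - (j : ℤ) ≤ d := by linarith
      exact itrans hd1 (by linarith) hk0 hkm hL hU hid hlo hhi
  | right h ih =>
    obtain ⟨hb, hd, hdet, hu, hv⟩ := ih
    rename_i u v
    set a : ℤ := (ones u : ℤ) with ha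
    set b : ℤ := (u.length : ℤ) with hbz
    set c : ℤ := (ones v : ℤ) with hc
    set d : ℤ := (v.length : ℤ) with hdz
    have hb1 : 1 ≤ b := by simp only [hbz]; exact_mod_cast hb
    have hd1 : 1 ≤ d := by simp only [hdz]; exact_mod_cast hd
    have hlen : ((v ++ u).length : ℤ) = d + b := by push_cast [List.length_append]; ring
    have hones : (ones (v ++ u) : ℤ) = c + a := by
      unfold ones; push_cast [List.count_append]; rfl
    refine ⟨hb, by simp [List.length_append]; omega,
      by rw [hlen, hones]; linear_combination hdet, hu, ?_⟩
    intro j hj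
    rw [hlen, hones]
    by_cases hjd : j ≤ v.length
    · rw [hgt_append_le v u hjd]
      set Y := hgt v j with hY
      have hjdz : (j : ℤ) ≤ d := by simp only [hdz]; exact_mod_cast hjd
      obtain ⟨hL, hU⟩ := hv j hjd
      rw [← hY] at hL hU
      have hid : d * ((d + b) * Y - (j : ℤ) * (c + a))
          = (b + d) * (d * Y - (j : ℤ) * c) + d - (d - (j : ℤ)) := by
        linear_combination (j : ℤ) * hdet
      have hlo : d * (1 - (c + a)) - d + 1 ≤ (b + d) * (1 - c) + d - d := by
        linarith [hdet]
      have hhi : (b + d) * (d - c) + d ≤ d * ((d + b) - (c + a)) + d - 1 := by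
        linarith [hdet]
      have hk0 : (0 : ℤ) ≤ d - (j : ℤ) := by linarith
      have hkm : d - (j : ℤ) ≤ d := by linarith
      exact itrans hd1 (by linarith) hk0 hkm hL hU hid hlo hhi
    · push_neg at hjd
      obtain ⟨k, rfl⟩ : ∃ k, j = v.length + k := ⟨j - v.length, by omega⟩
      have hkb : k ≤ u.length := by
        simp only [List.length_append] at hj; omega
      have hkbz : (k : ℤ) ≤ b := by simp only [hbz]; exact_mod_cast hkb
      rw [hgt_append_add v u k]
      rw [show ((v.length + k : ℕ) : ℤ) = d + (k : ℤ) by push_cast [hdz]; ring]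
      rw [← hc]
      set X := hgt u k with hX
      obtain ⟨hL, hU⟩ := hu k hkb
      rw [← hX] at hL hU
      have hid : b * ((d + b) * ((c : ℤ) + X) - ((d : ℤ) + (k : ℤ)) * (c + a))
          = (b + d) * (b * X - (k : ℤ) * a) + b - (k : ℤ) := by
        linear_combination (b - (k : ℤ)) * hdet
      have hlo : b * (1 - (c + a)) - b + 1 ≤ (b + d) * (-a) + b - b := by
        linarith [hdet]
      have hhi : (b + d) * (b - a - 1) + b ≤ b * ((d + b) - (c + a)) + b - 1 := by
        linarith [hdet]
      exact itrans hb1 (by linarith) (by positivity) hkbz hL hU hid hlo hhi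

lemma balancedWord_mono {x w : List (Fin 2)} (hinf : x <:+: w) (hw : BalancedWord w) :
    BalancedWord x :=
  fun v₁ v₂ h1 h2 hl => hw v₁ v₂ (h1.trans hinf) (h2.trans hinf) hl

lemma ones_take_prefix (s x r : List (Fin 2)) :
    hgt (s ++ x ++ r) (s.length + x.length) = (ones s : ℤ) + ones x := by
  unfold hgt ones
  rw [List.append_assoc, List.take_length_add_append, List.take_append_of_le_length (le_refl _),
    List.take_length]
  push_cast [List.count_append]; ring

lemma ones_take_prefix' (s x r : List (Fin 2)) :
    hgt (s ++ x ++ r) s.length = (ones s : ℤ) := by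
  unfold hgt ones
  rw [List.append_assoc, List.take_left]

/-- A word with a "mechanical" certificate is cyclically balanced. -/
lemma cert_balanced (w : List (Fin 2)) (t : ℤ) (hN : 0 < w.length)
    (hcert : ∀ k ≤ w.length,
      t - w.length + 1 ≤ (w.length : ℤ) * hgt w k - k * (ones w) ∧
      (w.length : ℤ) * hgt w k - k * (ones w) ≤ t) :
    CyclicallyBalanced w := by
  set N : ℤ := (w.length : ℤ) with hNdef
  set P : ℤ := (ones w : ℤ) with hPdef
  have hN1 : 1 ≤ N := by simp only [hNdef]; exact_mod_cast hN
  -- certificate for w ++ w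
  have h2 : ∀ m ≤ (w ++ w).length,
      t - N + 1 ≤ N * hgt (w ++ w) m - m * P ∧ N * hgt (w ++ w) m - m * P ≤ t := by
    intro m hm
    rcases le_or_gt m w.length with hmN | hmN
    · rw [hgt_append_le w w hmN]; exact hcert m hmN
    · obtain ⟨j, rfl⟩ : ∃ j, m = w.length + j := ⟨m - w.length, by omega⟩
      have hj : j ≤ w.length := by simp only [List.length_append] at hm; omega
      rw [hgt_append_add w w j]
      obtain ⟨hL, hU⟩ := hcert j hj
      rw [show ((w.length + j : ℕ) : ℤ) = N + (j : ℤ) by push_cast [hNdef]; ring]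
      constructor <;> [linarith [hL]; linarith [hU]]
      -- N * (P + hgt w j) - (N + j) * P = N * hgt w j - j * P  since N*P? no: N*P - N*P? check below
  -- bound on every infix of w ++ w
  have key : ∀ x : List (Fin 2), x <:+: (w ++ w) →
      1 - N ≤ N * (ones x : ℤ) - (x.length : ℤ) * P ∧
      N * (ones x : ℤ) - (x.length : ℤ) * P ≤ N - 1 := by
    intro x ⟨s, r, hsr⟩
    have hlen : s.length + x.length ≤ (w ++ w).length := by
      rw [← hsr]; simp only [List.length_append]; omega
    have e1 := ones_take_prefix s x r
    have e2 := ones_take_prefix' s x r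
    rw [hsr] at e1 e2
    obtain ⟨hL1, hU1⟩ := h2 (s.length + x.length) hlen
    obtain ⟨hL2, hU2⟩ := h2 s.length (by omega)
    rw [e1] at hL1 hU1
    rw [e2] at hL2 hU2
    push_cast at hL1 hU1 ⊢
    constructor <;> linarith
  -- conclusion
  intro a b hab
  have hinf : (b ++ a) <:+: (w ++ w) := ⟨a, b, by rw [hab]; simp [List.append_assoc]⟩
  refine balancedWord_mono hinf ?_
  intro v₁ v₂ h1 h2' hl
  obtain ⟨hA1, hA2⟩ := key v₁ h1
  obtain ⟨hB1, hB2⟩ := key v₂ h2'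
  rw [hl] at hA1 hA2
  set δ : ℤ := (ones v₁ : ℤ) - (ones v₂ : ℤ) with hδ
  have hd1 : δ ≤ 1 := by
    by_contra hcge
    push_neg at hcge
    have : 2 ≤ δ := hcge
    have : N * 2 ≤ N * δ := mul_le_mul_of_nonneg_left this (by linarith)
    nlinarith
  have hd2 : -1 ≤ δ := by
    by_contra hcge
    push_neg at hcge
    have : δ ≤ -2 := by omega
    have : N * δ ≤ N * (-2) := mul_le_mul_of_nonneg_left this (by linarith)
    nlinarith
  omega

lemma wpow_zero (u : List (Fin 2)) : wpow u 0 = [] := rfl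

lemma wpow_succ' (u : List (Fin 2)) (n : ℕ) : wpow u (n + 1) = wpow u n ++ u := by
  unfold wpow
  rw [List.replicate_succ', List.flatten_append]
  simp

/-- `(uv)^n u` is the first component of a standard pair. -/
lemma comp1 {u v : List (Fin 2)} (h : IsStandardPair u v) (n : ℕ) :
    IsStandardPair (wpow (u ++ v) n ++ u) (v ++ u) := by
  induction n with
  | zero => rw [wpow_zero, List.nil_append]; exact h.right
  | succ n ih =>
    have := ih.left
    rw [show wpow (u ++ v) (n + 1) ++ u = wpow (u ++ v) n ++ u ++ (v ++ u) by
      rw [wpow_succ']; simp [List.append_assoc]]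
    exact this

/-- `(vu)^n v` is the second component of a standard pair. -/
lemma comp2 {u v : List (Fin 2)} (h : IsStandardPair u v) (n : ℕ) :
    IsStandardPair (u ++ v) (wpow (v ++ u) n ++ v) := by
  induction n with
  | zero => rw [wpow_zero, List.nil_append]; exact h.left
  | succ n ih =>
    have := ih.right
    rw [show wpow (v ++ u) (n + 1) ++ v = wpow (v ++ u) n ++ v ++ (u ++ v) by
      rw [wpow_succ']; simp [List.append_assoc]]
    exact this

/-- `uv` and `vu` differ exactly at the first two positions. -/
lemma sp_z {u v : List (Fin 2)} (h : IsStandardPair u v) :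
    ∃ z : List (Fin 2), u ++ v = 0 :: 1 :: z ∧ v ++ u = 1 :: 0 :: z := by
  induction h with
  | base => exact ⟨[], rfl, rfl⟩
  | left h ih =>
    obtain ⟨z, hz1, hz2⟩ := ih
    rename_i u v
    refine ⟨z ++ v, ?_, ?_⟩
    · rw [hz1]; simp
    · rw [← List.append_assoc, hz2]; simp
  | right h ih =>
    obtain ⟨z, hz1, hz2⟩ := ih
    rename_i u v
    refine ⟨z ++ u, ?_, ?_⟩
    · rw [← List.append_assoc, hz1]; simp
    · rw [hz2]; simp

/-- rotation preserves cyclic balance -/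
lemma cyc_rot {x y : List (Fin 2)} (h : CyclicallyBalanced (x ++ y)) :
    CyclicallyBalanced (y ++ x) := by
  intro a b hab
  rcases List.append_eq_append_iff.mp hab.symm with ⟨c, hc1, hc2⟩ | ⟨c, hc1, hc2⟩
  · -- y = a ++ c, b = c ++ x
    have hx : x ++ y = (x ++ a) ++ c := by rw [hc1]; simp [List.append_assoc]
    have hb := h (x ++ a) c hx
    rw [hc2]
    simpa [List.append_assoc] using hb
  · -- a = y ++ c, x = c ++ b
    have hx : x ++ y = c ++ (b ++ y) := by rw [hc2]; simp [List.append_assoc]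
    have hb := h c (b ++ y) hx
    rw [hc1]
    simpa [List.append_assoc] using hb

/-- `u²v²` is not cyclically balanced for a standard pair. -/
lemma sp_unbal {u v : List (Fin 2)} (h : IsStandardPair u v) :
    ¬ CyclicallyBalanced (u ++ u ++ v ++ v) := by
  obtain ⟨z, hz1, hz2⟩ := sp_z h
  intro hcb
  have h1 : CyclicallyBalanced (v ++ (u ++ u ++ v)) := by
    apply cyc_rot
    rw [show u ++ u ++ v ++ v = (u ++ u ++ v) ++ v from by simp [List.append_assoc]] at hcb
    exact hcb
  have hsplit : v ++ (u ++ u ++ v) = (1 :: 0 :: (z ++ [0])) ++ (1 :: z) := by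
    have : v ++ (u ++ u ++ v) = (v ++ u) ++ (u ++ v) := by simp [List.append_assoc]
    rw [this, hz1, hz2]; simp
  have hbal := h1 _ _ hsplit
  -- the word (1 :: z) ++ (1 :: 0 :: (z ++ [0])) = (1 :: (z ++ [1])) ++ (0 :: (z ++ [0]))
  have hw : (1 :: z) ++ (1 :: 0 :: (z ++ [0])) = (1 :: (z ++ [1])) ++ (0 :: (z ++ [0])) := by
    simp
  have hone : ((1 : Fin 2) :: (z ++ [1])) <:+: ((1 :: z) ++ (1 :: 0 :: (z ++ [0]))) :=
    ⟨[], 0 :: (z ++ [0]), by rw [hw]; simp⟩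
  have htwo : ((0 : Fin 2) :: (z ++ [0])) <:+: ((1 :: z) ++ (1 :: 0 :: (z ++ [0]))) :=
    ⟨1 :: (z ++ [1]), [], by rw [hw]; simp⟩
  have hlen : ((1 : Fin 2) :: (z ++ [1])).length = ((0 : Fin 2) :: (z ++ [0])).length := by
    simp
  have hfin := hbal _ _ hone htwo hlen
  have e1 : ones (1 :: (z ++ [1])) = ones z + 2 := by
    simp [ones, List.count_append, List.count_cons]
  have e2 : ones ((0 : Fin 2) :: (z ++ [0])) = ones z := by
    simp [ones, List.count_append, List.count_cons]
  rw [e1, e2] at hfin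
  omega

/-- Stern–Brocot style existence of the defining quadruple. -/
lemma exists_quad : ∀ q p : ℕ, Nat.Coprime p q → 0 < p → p < q →
    ∃ a b c d : ℕ, a + c = p ∧ b + d = q ∧ b * c = a * d + 1 ∧ a < b ∧ c ≤ d := by
  intro q
  induction q using Nat.strong_induction_on with
  | _ q ih =>
    intro p hcop hp hpq
    rcases lt_trichotomy (2 * p) q with h2 | h2 | h2
    · -- p < q - p : recurse on (p, q - p)
      have hc' : Nat.Coprime p (q - p) := (Nat.coprime_sub_self_right hpq.le).mpr hcop
      obtain ⟨a, b, c, d, h1, h2', h3, h4, h5⟩ :=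
        ih (q - p) (by omega) p hc' hp (by omega)
      refine ⟨a, a + b, c, c + d, h1, by omega, ?_, by omega, by omega⟩
      have : (a + b) * c = a * c + b * c := by ring
      have h6 : a * (c + d) = a * c + a * d := by ring
      omega
    · -- q = 2p : coprime forces p = 1
      have hp1 : p = 1 := by
        have hdvd : p ∣ q := ⟨2, by omega⟩
        have h1 : p ∣ Nat.gcd p q := Nat.dvd_gcd dvd_rfl hdvd
        rw [Nat.Coprime.gcd_eq_one hcop] at h1
        exact Nat.dvd_one.mp h1
      exact ⟨0, 1, 1, 1, by omega, by omega, by omega, by omega, by omega⟩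
    · -- q - p < p : recurse on (q - p, p)
      have hc' : Nat.Coprime (q - p) p := (Nat.coprime_sub_self_left hpq.le).mpr hcop.symm
      obtain ⟨a, b, c, d, h1, h2', h3, h4, h5⟩ :=
        ih p hpq (q - p) hc' (by omega) (by omega)
      have hc0 : c ≠ 0 := by rintro rfl; simp at h3
      refine ⟨d, c + d, b, a + b, by omega, by omega, ?_, by omega, by omega⟩
      have h6 : (c + d) * b = c * b + d * b := by ring
      have h7 : d * (a + b) = d * a + d * b := by ring
      have h8 : c * b = b * c := by ring
      have h9 : d * a = a * d := by ring
      omega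

/-- Realization of a quadruple as a standard pair. -/
lemma quad_realize : ∀ s a b c d : ℕ, b + d ≤ s → a < b → c ≤ d → b * c = a * d + 1 →
    ∃ u v : List (Fin 2), IsStandardPair u v ∧
      ones u = a ∧ u.length = b ∧ ones v = c ∧ v.length = d := by
  intro s
  induction s with
  | zero => intro a b c d hs hab _ _; omega
  | succ s ih =>
    intro a b c d hs hab hcd hdet
    have hb1 : 1 ≤ b := by omega
    have hc0 : c ≠ 0 := by rintro rfl; simp at hdet
    have hc1 : 1 ≤ c := by omega
    have hd1 : 1 ≤ d := by omega
    rcases lt_trichotomy d b with hbd | hbd | hbd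
    · -- left move
      have hca : c ≤ a := by
        by_contra hac
        push_neg at hac
        have m1 : (d + 1) * c ≤ b * c := Nat.mul_le_mul (by omega) (le_refl c)
        have m2 : d * (a + 1) ≤ d * c := Nat.mul_le_mul (le_refl d) (by omega)
        have e1 : (d + 1) * c = d * c + c := by ring
        have e2 : d * (a + 1) = d * a + d := by ring
        have e3 : d * a = a * d := by ring
        omega
      have e1 : (b - d) * c + d * c = b * c := by
        rw [← Nat.add_mul, Nat.sub_add_cancel hbd.le]
      have e2 : (a - c) * d + c * d = a * d := by
        rw [← Nat.add_mul, Nat.sub_add_cancel hca]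
      have e3 : c * d = d * c := by ring
      have hdet' : (b - d) * c = (a - c) * d + 1 := by omega
      have hinv : a - c < b - d := by
        by_contra hcon
        push_neg at hcon
        have m1 : (b - d) * c ≤ (b - d) * d := Nat.mul_le_mul (le_refl _) hcd
        have m2 : (b - d) * d ≤ (a - c) * d := Nat.mul_le_mul hcon (le_refl d)
        omega
      obtain ⟨u₀, v₀, hsp, hu1, hu2, hv1, hv2⟩ :=
        ih (a - c) (b - d) c d (by omega) hinv hcd hdet'
      refine ⟨u₀ ++ v₀, v₀, hsp.left, ?_, ?_, hv1, hv2⟩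
      · unfold ones at *; rw [List.count_append]; omega
      · rw [List.length_append]; omega
    · -- base case b = d
      have hbd' : b = d := hbd.symm
      subst hbd' 
      have hac : a < c := by
        by_contra hca
        push_neg at hca
        have m1 : b * c ≤ b * a := Nat.mul_le_mul (le_refl b) hca
        have e1 : b * a = a * b := by ring
        omega
      have e1 : b * (c - a) + b * a = b * c := by
        rw [← Nat.mul_add, Nat.sub_add_cancel hac.le]
      have e2 : b * a = a * b := by ring
      have hone : b * (c - a) = 1 := by omega
      have hb'' : b = 1 := Nat.dvd_one.mp ⟨c - a, hone.symm⟩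
      have hca1 : c - a = 1 := by rw [hb'', one_mul] at hone; exact hone
      have ha0 : a = 0 := by omega
      have hcc : c = 1 := by omega
      refine ⟨[0], [1], IsStandardPair.base, ?_, ?_, ?_, ?_⟩ <;>
        simp [ones, ha0, hb'', hcc]
    · -- right move
      have hac : a < c := by
        by_contra hca
        push_neg at hca
        have m1 : b * c ≤ b * a := Nat.mul_le_mul (le_refl b) hca
        have m2 : b * a ≤ d * a := Nat.mul_le_mul hbd.le (le_refl a)
        have e1 : d * a = a * d := by ring
        omega
      have e1 : b * (c - a) + b * a = b * c := by
        rw [← Nat.mul_add, Nat.sub_add_cancel hac.le]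
      have e2 : a * (d - b) + a * b = a * d := by
        rw [← Nat.mul_add, Nat.sub_add_cancel hbd.le]
      have e3 : a * b = b * a := by ring
      have hdet' : b * (c - a) = a * (d - b) + 1 := by omega
      have hinv : c - a ≤ d - b := by
        by_contra hcon
        push_neg at hcon
        have m1 : b * (d - b + 1) ≤ b * (c - a) := Nat.mul_le_mul (le_refl b) (by omega)
        have m2 : (a + 1) * (d - b) ≤ b * (d - b) := Nat.mul_le_mul hab (le_refl _)
        have e4 : b * (d - b + 1) = b * (d - b) + b := by ring
        have e5 : (a + 1) * (d - b) = a * (d - b) + (d - b) := by ring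
        omega
      obtain ⟨u₀, v₀, hsp, hu1, hu2, hv1, hv2⟩ :=
        ih a b (c - a) (d - b) (by omega) hab hinv hdet'
      refine ⟨u₀, v₀ ++ u₀, hsp.right, hu1, hu2, ?_, ?_⟩
      · unfold ones at *; rw [List.count_append]; omega
      · rw [List.length_append]; omega


lemma sp_cbal_fst {u v : List (Fin 2)} (h : IsStandardPair u v) :
    CyclicallyBalanced u := by
  obtain ⟨hb, _, _, hu, _⟩ := sp_inv h
  refine cert_balanced u ((u.length : ℤ) - ones u - 1) hb ?_
  intro k hk
  obtain ⟨h1, h2⟩ := hu k hk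
  constructor <;> linarith

lemma sp_cbal_snd {u v : List (Fin 2)} (h : IsStandardPair u v) :
    CyclicallyBalanced v := by
  obtain ⟨_, hd, _, _, hv⟩ := sp_inv h
  refine cert_balanced v ((v.length : ℤ) - ones v) hd ?_
  intro j hj
  obtain ⟨h1, h2⟩ := hv j hj
  constructor <;> linarith

/-- Proposition `sw2`: for coprime `p/q ∈ (0,1)` there is a standard pair
`(u,v)` of slope `ς(uv) = p/q`; and every such pair satisfies `|uv|₁ = p`, `|uv| = q`,
`|u|·|v|₁ − |u|₁·|v| = 1`, the words `(uv)ⁿu` and `(vu)ⁿv` are cyclically balanced for all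
`n ≥ 0`, and `u²v²` is not cyclically balanced. -/
theorem standard_pair_slope (p q : ℕ) (hcop : Nat.Coprime p q) (hp : 0 < p) (hpq : p < q) :
    (∃ u v : List (Fin 2), IsStandardPair u v ∧
      ones (u ++ v) * q = p * (u ++ v).length) ∧
    ∀ u v : List (Fin 2), IsStandardPair u v → ones (u ++ v) * q = p * (u ++ v).length →
      ones (u ++ v) = p ∧ (u ++ v).length = q ∧
      u.length * ones v = ones u * v.length + 1 ∧
      (∀ n : ℕ, CyclicallyBalanced (wpow (u ++ v) n ++ u) ∧
        CyclicallyBalanced (wpow (v ++ u) n ++ v)) ∧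
      ¬ CyclicallyBalanced (u ++ u ++ v ++ v) := by
  constructor
  · -- existence
    obtain ⟨a, b, c, d, h1, h2, h3, h4, h5⟩ := exists_quad q p hcop hp hpq
    obtain ⟨u, v, hsp, hu1, hu2, hv1, hv2⟩ :=
      quad_realize (b + d) a b c d (le_refl _) h4 h5 h3
    refine ⟨u, v, hsp, ?_⟩
    have hA : ones (u ++ v) = a + c := by
      unfold ones at *; rw [List.count_append]; omega
    have hB : (u ++ v).length = b + d := by rw [List.length_append]; omega
    rw [hA, hB, h1, h2]
  · -- universal part
    intro u v h hslope
    obtain ⟨hb, hd, hdetZ, hu, hv⟩ := sp_inv h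
    have hdetN : u.length * ones v = ones u * v.length + 1 := by exact_mod_cast hdetZ
    have hA : ones (u ++ v) = ones u + ones v := by
      unfold ones; rw [List.count_append]
    have hB : (u ++ v).length = u.length + v.length := List.length_append
    -- coprimality of (ones (u++v), (u++v).length)
    have hg : Nat.Coprime (ones (u ++ v)) ((u ++ v).length) := by
      have h1 : ((Nat.gcd (ones (u ++ v)) ((u ++ v).length) : ℕ) : ℤ) ∣ (ones (u ++ v) : ℤ) :=
        Int.natCast_dvd_natCast.mpr (Nat.gcd_dvd_left _ _)
      have h2 : ((Nat.gcd (ones (u ++ v)) ((u ++ v).length) : ℕ) : ℤ) ∣ ((u ++ v).length : ℤ) :=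
        Int.natCast_dvd_natCast.mpr (Nat.gcd_dvd_right _ _)
      have h3 : ((Nat.gcd (ones (u ++ v)) ((u ++ v).length) : ℕ) : ℤ) ∣
          ((u.length : ℤ) * (ones (u ++ v) : ℤ) - (ones u : ℤ) * ((u ++ v).length : ℤ)) :=
        dvd_sub (h1.mul_left _) (h2.mul_left _)
      have h4 : (u.length : ℤ) * (ones (u ++ v) : ℤ) - (ones u : ℤ) * ((u ++ v).length : ℤ) = 1 := by
        rw [hA, hB]; push_cast; linear_combination hdetZ
      rw [h4] at h3
      have h5 : Nat.gcd (ones (u ++ v)) ((u ++ v).length) ∣ 1 := by exact_mod_cast h3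
      exact Nat.dvd_one.mp h5
    have hq0 : 0 < q := by omega
    have hqB : q ∣ (u ++ v).length := by
      refine Nat.Coprime.dvd_of_dvd_mul_left hcop.symm ⟨ones (u ++ v), ?_⟩
      rw [← hslope]; ring
    have hBq : (u ++ v).length ∣ q := by
      refine Nat.Coprime.dvd_of_dvd_mul_left hg.symm ⟨p, ?_⟩
      rw [hslope]; ring
    have hlen : (u ++ v).length = q := Nat.dvd_antisymm hBq hqB
    have hones : ones (u ++ v) = p := by
      have : ones (u ++ v) * q = p * q := by rw [hslope, hlen]
      exact Nat.eq_of_mul_eq_mul_right hq0 this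
    refine ⟨hones, hlen, hdetN, ?_, sp_unbal h⟩
    intro n
    exact ⟨sp_cbal_fst (comp1 h n), sp_cbal_snd (comp2 h n)⟩
end
end

section
/- Let A₀, A₁ be 2×2 real matrices satisfying the technical hypotheses and the Sturmian hypothesis. Then there exists a family of norms {‖·‖_α : α ∈ (0,∞)} on ℝ² such that: for every v ∈ ℝ², every α ∈ (0,∞) and i ∈ {0,1}, ‖A_i^(α) v‖_α ≤ ϱ(α)‖v‖_α; and for every compact K ⊂ (0,∞), there is a constant C > 1 depending on K such that ‖v‖ ≤ C‖v‖_α ≤ C²‖v‖ for all v ∈ ℝ² and α ∈ K (where ‖·‖ is the Euclidean norm). -/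
open Filter Matrix Set Topology

noncomputable section

namespace AdaptedNormsAux

lemma mnorm_eq (A : M2) :
    mnorm A = Real.sqrt (A 0 0 ^2 + A 0 1 ^2 + (A 1 0 ^2 + A 1 1 ^2)) := by
  simp [mnorm, Fin.sum_univ_two]

lemma mnorm_nonneg (A : M2) : 0 ≤ mnorm A := Real.sqrt_nonneg _

lemma abs_entry_le_mnorm (A : M2) (i j : Fin 2) : |A i j| ≤ mnorm A := by
  rw [mnorm_eq, ← Real.sqrt_sq_eq_abs]
  apply Real.sqrt_le_sqrt
  fin_cases i <;> fin_cases j <;> simp only [Fin.zero_eta, Fin.mk_one, Fin.isValue] <;>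
    nlinarith [sq_nonneg (A 0 0), sq_nonneg (A 0 1), sq_nonneg (A 1 0), sq_nonneg (A 1 1)]

lemma entry_le_mnorm (A : M2) (i j : Fin 2) : A i j ≤ mnorm A :=
  (le_abs_self _).trans (abs_entry_le_mnorm A i j)

lemma mnorm_le_of_entries (A : M2) {c : ℝ} (hc : 0 ≤ c) (h : ∀ i j, |A i j| ≤ c) :
    mnorm A ≤ 2 * c := by
  rw [mnorm_eq]
  have : A 0 0 ^2 + A 0 1 ^2 + (A 1 0 ^2 + A 1 1 ^2) ≤ (2*c)^2 := by
    have h00 := h 0 0; have h01 := h 0 1; have h10 := h 1 0; have h11 := h 1 1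
    have := abs_le.1 h00; have := abs_le.1 h01; have := abs_le.1 h10; have := abs_le.1 h11
    nlinarith
  calc Real.sqrt _ ≤ Real.sqrt ((2*c)^2) := Real.sqrt_le_sqrt this
  _ = 2*c := by rw [Real.sqrt_sq (by linarith)]

lemma mnorm_mul_le (A B : M2) : mnorm (A * B) ≤ mnorm A * mnorm B := by
  have hs : ∀ i j, ((A*B) i j)^2 ≤ (A i 0 ^2 + A i 1 ^2) * (B 0 j ^2 + B 1 j ^2) := by
    intro i j
    have : (A*B) i j = A i 0 * B 0 j + A i 1 * B 1 j := by
      simp [Matrix.mul_apply, Fin.sum_univ_two]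
    rw [this]; nlinarith [sq_nonneg (A i 0 * B 1 j - A i 1 * B 0 j)]
  rw [mnorm_eq, mnorm_eq, mnorm_eq, ← Real.sqrt_mul (by positivity)]
  apply Real.sqrt_le_sqrt
  have h00 := hs 0 0; have h01 := hs 0 1; have h10 := hs 1 0; have h11 := hs 1 1
  nlinarith [sq_nonneg (A 0 0), sq_nonneg (A 1 1)]

lemma mnorm_smul (c : ℝ) (hc : 0 ≤ c) (A : M2) : mnorm (c • A) = c * mnorm A := by
  rw [mnorm_eq, mnorm_eq]
  have : ((c • A) 0 0)^2 + ((c • A) 0 1)^2 + (((c • A) 1 0)^2 + ((c • A) 1 1)^2)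
      = c^2 * (A 0 0 ^2 + A 0 1 ^2 + (A 1 0 ^2 + A 1 1 ^2)) := by
    simp [Matrix.smul_apply, smul_eq_mul]; ring
  rw [this, Real.sqrt_mul (by positivity), Real.sqrt_sq hc]

lemma enorm2_nonneg (v : Fin 2 → ℝ) : 0 ≤ enorm2 v := Real.sqrt_nonneg _

lemma enorm2_eq_zero {v : Fin 2 → ℝ} (h : enorm2 v = 0) : v = 0 := by
  have h2 : v 0 ^2 + v 1 ^2 ≤ 0 := Real.sqrt_eq_zero'.mp h
  have h0 : v 0 = 0 := by nlinarith [sq_nonneg (v 0), sq_nonneg (v 1)]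
  have h1 : v 1 = 0 := by nlinarith [sq_nonneg (v 0), sq_nonneg (v 1)]
  funext i; fin_cases i <;> simp only [Fin.zero_eta, Fin.mk_one, Fin.isValue, Pi.zero_apply] <;> assumption

lemma enorm2_add_le (v w : Fin 2 → ℝ) : enorm2 (v + w) ≤ enorm2 v + enorm2 w := by
  unfold enorm2
  have key : v 0 * w 0 + v 1 * w 1 ≤ Real.sqrt ((v 0^2 + v 1^2) * (w 0^2+w 1^2)) := by
    rcases le_or_gt (v 0 * w 0 + v 1 * w 1) 0 with h | h
    · exact h.trans (Real.sqrt_nonneg _)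
    · rw [show v 0 * w 0 + v 1 * w 1 = Real.sqrt ((v 0 * w 0 + v 1 * w 1)^2) from (Real.sqrt_sq h.le).symm]
      apply Real.sqrt_le_sqrt; nlinarith [sq_nonneg (v 0 * w 1 - v 1 * w 0)]
  have h2 : (v+w) 0 ^2 + (v+w) 1 ^2 ≤ (Real.sqrt (v 0^2+v 1^2) + Real.sqrt (w 0^2+w 1^2))^2 := by
    have e1 : Real.sqrt (v 0^2+v 1^2) ^2 = v 0^2+v 1^2 := Real.sq_sqrt (by positivity)
    have e2 : Real.sqrt (w 0^2+w 1^2) ^2 = w 0^2+w 1^2 := Real.sq_sqrt (by positivity)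
    have e3 : Real.sqrt ((v 0^2 + v 1^2) * (w 0^2+w 1^2)) = Real.sqrt (v 0^2+v 1^2) * Real.sqrt (w 0^2+w 1^2) := Real.sqrt_mul (by positivity) _
    simp only [Pi.add_apply]
    nlinarith [key]
  calc Real.sqrt ((v+w) 0 ^2 + (v+w) 1 ^2) ≤ Real.sqrt ((Real.sqrt (v 0^2+v 1^2) + Real.sqrt (w 0^2+w 1^2))^2) := Real.sqrt_le_sqrt h2
  _ = _ := Real.sqrt_sq (by positivity)

lemma enorm2_smul (c : ℝ) (v : Fin 2 → ℝ) : enorm2 (c • v) = |c| * enorm2 v := by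
  unfold enorm2
  have : (c • v) 0 ^2 + (c • v) 1 ^2 = c^2 * (v 0^2 + v 1^2) := by
    simp [smul_eq_mul]; ring
  rw [this, Real.sqrt_mul (by positivity), Real.sqrt_sq_eq_abs]

lemma enorm2_mulVec_le (M : M2) (v : Fin 2 → ℝ) :
    enorm2 (M.mulVec v) ≤ mnorm M * enorm2 v := by
  unfold enorm2
  have h0 : M.mulVec v 0 = M 0 0 * v 0 + M 0 1 * v 1 := by
    simp [Matrix.mulVec, dotProduct, Fin.sum_univ_two]
  have h1 : M.mulVec v 1 = M 1 0 * v 0 + M 1 1 * v 1 := by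
    simp [Matrix.mulVec, dotProduct, Fin.sum_univ_two]
  rw [mnorm_eq, h0, h1, ← Real.sqrt_mul (by positivity)]
  apply Real.sqrt_le_sqrt
  nlinarith [sq_nonneg (M 0 0 * v 1 - M 0 1 * v 0), sq_nonneg (M 1 0 * v 1 - M 1 1 * v 0), sq_nonneg (M 0 0), sq_nonneg (M 1 1)]


lemma wordProd_nil (A : Fin 2 → M2) : wordProd A [] = 1 := rfl

lemma wordProd_append (A : Fin 2 → M2) (x y : List (Fin 2)) :
    wordProd A (x ++ y) = wordProd A y * wordProd A x := by
  unfold wordProd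
  rw [List.map_append, List.reverse_append, List.prod_append]

lemma wordProd_singleton (A : Fin 2 → M2) (i : Fin 2) : wordProd A [i] = A i := by
  simp [wordProd]

lemma wordProd_cons (A : Fin 2 → M2) (i : Fin 2) (u : List (Fin 2)) :
    wordProd A (i :: u) = wordProd A u * A i := by
  have : (i :: u) = [i] ++ u := rfl
  rw [this, wordProd_append, wordProd_singleton]

/-- entries of a word product of entrywise-nonneg matrices are nonneg -/
lemma wordProd_nonneg {A : Fin 2 → M2} (hA : ∀ k i j, 0 ≤ A k i j) (u : List (Fin 2)) :
    ∀ i j, 0 ≤ wordProd A u i j := by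
  induction u with
  | nil => intro i j; rw [wordProd_nil]; by_cases h : i = j <;> simp [Matrix.one_apply, h]
  | cons a u ih =>
    intro i j
    rw [wordProd_cons, Matrix.mul_apply]
    exact Finset.sum_nonneg fun k _ => mul_nonneg (ih i k) (hA a k j)

lemma mul_entries_nonneg {A B : M2} (hA : ∀ i j, 0 ≤ A i j) (hB : ∀ i j, 0 ≤ B i j) :
    ∀ i j, 0 ≤ (A * B) i j := by
  intro i j
  rw [Matrix.mul_apply]
  exact Finset.sum_nonneg fun k _ => mul_nonneg (hA i k) (hB k j)

lemma pow_entries_nonneg {A : M2} (hA : ∀ i j, 0 ≤ A i j) (n : ℕ) :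
    ∀ i j, 0 ≤ (A ^ n) i j := by
  induction n with
  | zero => intro i j; by_cases h : i = j <;> simp [Matrix.one_apply, h, pow_zero]
  | succ n ih => rw [pow_succ]; exact mul_entries_nonneg ih hA

lemma diag_pow_ge {A : M2} (hA : ∀ i j, 0 ≤ A i j) (i : Fin 2) (n : ℕ) :
    A i i ^ n ≤ (A ^ n) i i := by
  induction n with
  | zero => simp [Matrix.one_apply]
  | succ n ih =>
    rw [pow_succ, pow_succ, Matrix.mul_apply]
    calc A i i ^ n * A i i ≤ (A ^ n) i i * A i i :=
          mul_le_mul_of_nonneg_right ih (hA i i)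
    _ ≤ ∑ k, (A ^ n) i k * A k i := by
        apply Finset.single_le_sum (f := fun k => (A ^ n) i k * A k i)
          (fun k _ => mul_nonneg (pow_entries_nonneg hA n i k) (hA k i)) (Finset.mem_univ i)

/-- the sup over words of fixed length of the Frobenius norm of the product -/
def snorm (A₀ A₁ : M2) (α : ℝ) (n : ℕ) : ℝ :=
  ⨆ u : Fin n → Fin 2, mnorm ((List.ofFn fun i => pairα A₀ A₁ α (u i)).prod)

variable {A₀ A₁ : M2} {α : ℝ}

lemma snorm_nonneg (n : ℕ) : 0 ≤ snorm A₀ A₁ α n := by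
  have : (fun _ : Fin n → Fin 2 => (0:ℝ)) ≤ fun u => mnorm ((List.ofFn fun i => pairα A₀ A₁ α (u i)).prod) :=
    fun u => mnorm_nonneg _
  calc (0:ℝ) = ⨆ _ : Fin n → Fin 2, (0:ℝ) := by rw [ciSup_const]
  _ ≤ _ := ciSup_mono (Set.Finite.bddAbove (Set.finite_range _)) fun u => mnorm_nonneg _

lemma le_snorm (n : ℕ) (u : Fin n → Fin 2) :
    mnorm ((List.ofFn fun i => pairα A₀ A₁ α (u i)).prod) ≤ snorm A₀ A₁ α n :=
  le_ciSup (f := fun u : Fin n → Fin 2 => mnorm ((List.ofFn fun i => pairα A₀ A₁ α (u i)).prod))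
    (Set.Finite.bddAbove (Set.finite_range _)) u

lemma exists_snorm_eq (n : ℕ) : ∃ u₀ : Fin n → Fin 2,
    (∀ u : Fin n → Fin 2, mnorm ((List.ofFn fun i => pairα A₀ A₁ α (u i)).prod)
      ≤ mnorm ((List.ofFn fun i => pairα A₀ A₁ α (u₀ i)).prod)) ∧
    snorm A₀ A₁ α n = mnorm ((List.ofFn fun i => pairα A₀ A₁ α (u₀ i)).prod) := by
  obtain ⟨u₀, hu₀⟩ := Finite.exists_max
    (fun u : Fin n → Fin 2 => mnorm ((List.ofFn fun i => pairα A₀ A₁ α (u i)).prod))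
  exact ⟨u₀, hu₀, le_antisymm (ciSup_le hu₀) (le_snorm n u₀)⟩

lemma snorm_add_le (m n : ℕ) :
    snorm A₀ A₁ α (m + n) ≤ snorm A₀ A₁ α m * snorm A₀ A₁ α n := by
  apply ciSup_le
  intro u
  rw [List.ofFn_add, List.prod_append]
  calc mnorm _ ≤ mnorm ((List.ofFn fun i : Fin m => pairα A₀ A₁ α (u (Fin.castAdd n i))).prod)
        * mnorm ((List.ofFn fun i : Fin n => pairα A₀ A₁ α (u (Fin.natAdd m i))).prod) :=
      mnorm_mul_le _ _
  _ ≤ _ := mul_le_mul (le_snorm m _) (le_snorm n _) (mnorm_nonneg _) (snorm_nonneg m)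

lemma mnorm_wordProd_le_snorm (w : List (Fin 2)) :
    mnorm (wordProd (pairα A₀ A₁ α) w) ≤ snorm A₀ A₁ α w.length := by
  have hlen : w.reverse.length = w.length := w.length_reverse
  set u : Fin w.length → Fin 2 := fun i => w.reverse.get (Fin.cast hlen.symm i) with hu
  have h1 : List.ofFn u = w.reverse := by
    rw [hu]
    exact (List.ofFn_congr hlen w.reverse.get).symm.trans (List.ofFn_get _)
  have h2 : (List.ofFn fun i => pairα A₀ A₁ α (u i)) = (w.map (pairα A₀ A₁ α)).reverse := by
    calc List.ofFn (pairα A₀ A₁ α ∘ u) = (List.ofFn u).map (pairα A₀ A₁ α) :=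
          (List.map_ofFn (f := u) (g := pairα A₀ A₁ α)).symm
    _ = w.reverse.map (pairα A₀ A₁ α) := by rw [h1]
    _ = (w.map (pairα A₀ A₁ α)).reverse := List.map_reverse
  show mnorm ((w.map (pairα A₀ A₁ α)).reverse).prod ≤ _
  rw [← h2]
  exact le_snorm _ u

variable (A₀ A₁ : M2) (α : ℝ)

lemma pair_zero : pairα A₀ A₁ α 0 = A₀ := rfl
lemma pair_one : pairα A₀ A₁ α 1 = α • A₁ := rfl

lemma pow_le_snorm (hA₀ : ∀ i j, 0 ≤ A₀ i j) (n : ℕ) :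
    max (A₀ 0 0) (A₀ 1 1) ^ n ≤ snorm A₀ A₁ α n := by
  have hprod : (List.ofFn fun _ : Fin n => pairα A₀ A₁ α 0).prod = A₀ ^ n := by
    rw [List.ofFn_const, List.prod_replicate, pair_zero]
  have h1 : mnorm ((List.ofFn fun _ : Fin n => pairα A₀ A₁ α 0).prod) ≤ snorm A₀ A₁ α n :=
    le_snorm n (fun _ => 0)
  rw [hprod] at h1
  refine le_trans ?_ h1
  rcases max_cases (A₀ 0 0) (A₀ 1 1) with ⟨h, _⟩ | ⟨h, _⟩ <;> rw [h]
  · calc A₀ 0 0 ^ n ≤ (A₀ ^ n) 0 0 := diag_pow_ge hA₀ 0 n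
    _ ≤ mnorm (A₀ ^ n) := entry_le_mnorm _ 0 0
  · calc A₀ 1 1 ^ n ≤ (A₀ ^ n) 1 1 := diag_pow_ge hA₀ 1 n
    _ ≤ mnorm (A₀ ^ n) := entry_le_mnorm _ 1 1

lemma amax_pos (htr : 0 < A₀.trace) : 0 < max (A₀ 0 0) (A₀ 1 1) := by
  rw [Matrix.trace_fin_two] at htr
  rcases le_or_gt (A₀ 0 0) 0 with h | h
  · exact lt_max_of_lt_right (by linarith)
  · exact lt_max_of_lt_left h

lemma snorm_pos (hA₀ : ∀ i j, 0 ≤ A₀ i j) (htr : 0 < A₀.trace) (n : ℕ) :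
    0 < snorm A₀ A₁ α n :=
  lt_of_lt_of_le (pow_pos (amax_pos A₀ htr) n) (pow_le_snorm A₀ A₁ α hA₀ n)

theorem tendsto_snorm_rpow (hA₀ : ∀ i j, 0 ≤ A₀ i j) (htr : 0 < A₀.trace) :
    Tendsto (fun n : ℕ => snorm A₀ A₁ α n ^ (1/(n:ℝ))) atTop (𝓝 (jsrα A₀ A₁ α))
    ∧ max (A₀ 0 0) (A₀ 1 1) ≤ jsrα A₀ A₁ α := by
  set a := max (A₀ 0 0) (A₀ 1 1) with ha_def
  have ha : 0 < a := amax_pos A₀ htr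
  have hpos : ∀ n, 0 < snorm A₀ A₁ α n := snorm_pos A₀ A₁ α hA₀ htr
  have hsub : Subadditive (fun n => Real.log (snorm A₀ A₁ α n)) := by
    intro m n
    rw [← Real.log_mul (hpos m).ne' (hpos n).ne']
    exact Real.log_le_log (hpos _) (snorm_add_le m n)
  have hbdd : BddBelow (Set.range fun n : ℕ => Real.log (snorm A₀ A₁ α n) / n) := by
    refine ⟨min (Real.log a) 0, ?_⟩
    rintro x ⟨n, rfl⟩
    rcases Nat.eq_zero_or_pos n with rfl | hn
    · simp
    · have h1 : Real.log (a ^ n) ≤ Real.log (snorm A₀ A₁ α n) :=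
        Real.log_le_log (pow_pos ha n) (pow_le_snorm A₀ A₁ α hA₀ n)
      rw [Real.log_pow] at h1
      have hn' : (0:ℝ) < n := by exact_mod_cast hn
      refine le_trans (min_le_left _ _) ?_
      rw [le_div_iff₀ hn']
      calc Real.log a * n = (n : ℝ) * Real.log a := by ring
      _ ≤ _ := h1
  have hlim := hsub.tendsto_lim hbdd
  have hexp : ∀ n : ℕ, snorm A₀ A₁ α n ^ (1/(n:ℝ))
      = Real.exp (Real.log (snorm A₀ A₁ α n) / n) := by
    intro n
    rw [Real.rpow_def_of_pos (hpos n), mul_one_div]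
  have h1 : Tendsto (fun n : ℕ => snorm A₀ A₁ α n ^ (1/(n:ℝ))) atTop
      (𝓝 (Real.exp hsub.lim)) := by
    exact Tendsto.congr (fun n => (hexp n).symm)
      ((Real.continuous_exp.tendsto hsub.lim).comp hlim)
  have hts : (fun n : ℕ => ⨆ u : Fin n → Fin 2,
      mnorm ((List.ofFn fun i => pairα A₀ A₁ α (u i)).prod) ^ (1/(n:ℝ)))
      = fun n : ℕ => snorm A₀ A₁ α n ^ (1/(n:ℝ)) := by
    funext n
    obtain ⟨u₀, hmax, heq⟩ := exists_snorm_eq (A₀:=A₀) (A₁:=A₁) (α:=α) n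
    rw [heq]
    apply le_antisymm
    · exact ciSup_le fun u => Real.rpow_le_rpow (mnorm_nonneg _) (hmax u) (by positivity)
    · exact le_ciSup (f := fun u : Fin n → Fin 2 =>
        mnorm ((List.ofFn fun i => pairα A₀ A₁ α (u i)).prod) ^ (1/(n:ℝ)))
        (Set.Finite.bddAbove (Set.finite_range _)) u₀
  have hjsr : jsrα A₀ A₁ α = Real.exp hsub.lim := by
    apply Filter.Tendsto.limUnder_eq
    rw [hts]; exact h1
  refine ⟨by rw [hjsr]; exact h1, ?_⟩
  rw [hjsr]
  have hev : ∀ᶠ n : ℕ in atTop, a ≤ snorm A₀ A₁ α n ^ (1/(n:ℝ)) := by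
    filter_upwards [eventually_ge_atTop 1] with n hn
    have hne : (n:ℝ) ≠ 0 := by positivity
    have : a = (a ^ n : ℝ) ^ (1/(n:ℝ)) := by
      rw [← Real.rpow_natCast a n, ← Real.rpow_mul ha.le, mul_one_div, div_self hne,
        Real.rpow_one]
    rw [this]
    exact Real.rpow_le_rpow (by positivity) (pow_le_snorm A₀ A₁ α hA₀ n) (by positivity)
  exact ge_of_tendsto h1 hev

lemma jsr_pos (hA₀ : ∀ i j, 0 ≤ A₀ i j) (htr : 0 < A₀.trace) : 0 < jsrα A₀ A₁ α :=
  lt_of_lt_of_le (amax_pos A₀ htr) (tendsto_snorm_rpow A₀ A₁ α hA₀ htr).2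

lemma trace_sq_ge {Q : M2} (hQ : ∀ i j, 0 ≤ Q i j) :
    (Q 0 0 + Q 1 1)^2 / 2 ≤ (Q*Q) 0 0 + (Q*Q) 1 1 := by
  have h00 : (Q*Q) 0 0 = Q 0 0 * Q 0 0 + Q 0 1 * Q 1 0 := by
    simp [Matrix.mul_apply, Fin.sum_univ_two]
  have h11 : (Q*Q) 1 1 = Q 1 0 * Q 0 1 + Q 1 1 * Q 1 1 := by
    simp [Matrix.mul_apply, Fin.sum_univ_two]
  rw [h00, h11]
  nlinarith [mul_nonneg (hQ 0 1) (hQ 1 0), sq_nonneg (Q 0 0 - Q 1 1)]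

lemma wordProd_pow (A : Fin 2 → M2) (w : List (Fin 2)) (k : ℕ) :
    wordProd A w ^ k = wordProd A ((List.replicate k w).flatten) := by
  induction k with
  | zero => simp [wordProd_nil]
  | succ k ih =>
    rw [List.replicate_succ, List.flatten_cons, wordProd_append, pow_succ, ih]

lemma length_flatten_replicate (w : List (Fin 2)) (k : ℕ) :
    ((List.replicate k w).flatten).length = k * w.length := by
  simp [List.length_flatten, List.map_replicate, List.sum_replicate, smul_eq_mul]

lemma pair_entries_nonneg (hA₀ : ∀ i j, 0 ≤ A₀ i j) (hA₁ : ∀ i j, 0 ≤ A₁ i j) (hα : 0 ≤ α) :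
    ∀ k i j, 0 ≤ pairα A₀ A₁ α k i j := by
  intro k i j
  have h01 : k = 0 ∨ k = 1 := by omega
  rcases h01 with h | h <;> rw [h]
  · exact hA₀ i j
  · rw [pair_one]; exact mul_nonneg hα (hA₁ i j)

/-- the trace of any word product is at most `2 ϱ^m` -/
theorem trace_wordProd_le (hA₀ : ∀ i j, 0 ≤ A₀ i j) (hA₁ : ∀ i j, 0 ≤ A₁ i j)
    (htr : 0 < A₀.trace) (hα : 0 ≤ α) (w : List (Fin 2)) (hw : 1 ≤ w.length) :
    wordProd (pairα A₀ A₁ α) w 0 0 + wordProd (pairα A₀ A₁ α) w 1 1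
      ≤ 2 * jsrα A₀ A₁ α ^ w.length := by
  set P := pairα A₀ A₁ α with hP
  set N := wordProd P w with hN
  set m := w.length with hm
  have hNnn : ∀ i j, 0 ≤ N i j := wordProd_nonneg (pair_entries_nonneg A₀ A₁ α hA₀ hA₁ hα) w
  set t := N 0 0 + N 1 1 with ht
  have ht0 : 0 ≤ t := add_nonneg (hNnn 0 0) (hNnn 1 1)
  -- step 1: (t/2)^(2^j) ≤ trace(N^(2^j))/2
  have claim : ∀ j : ℕ, (t/2)^(2^j) ≤ ((N^(2^j)) 0 0 + (N^(2^j)) 1 1)/2 := by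
    intro j
    induction j with
    | zero => simp [ht]
    | succ j ih =>
      have hQnn : ∀ i j', 0 ≤ (N^(2^j)) i j' := pow_entries_nonneg hNnn (2^j)
      have h2 : ((N^(2^j)) 0 0 + (N^(2^j)) 1 1)^2 / 2
          ≤ (N^(2^j)*N^(2^j)) 0 0 + (N^(2^j)*N^(2^j)) 1 1 := trace_sq_ge hQnn
      have hpow : N^(2^(j+1)) = N^(2^j) * N^(2^j) := by
        rw [← pow_add]; congr 1; rw [pow_succ]; ring
      rw [hpow]
      have e1 : (t/2)^(2^(j+1)) = ((t/2)^(2^j))^2 := by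
        rw [← pow_mul, pow_succ]
      rw [e1]
      have h3 : ((t/2)^(2^j))^2 ≤ (((N^(2^j)) 0 0 + (N^(2^j)) 1 1)/2)^2 :=
        pow_le_pow_left₀ (by positivity) ih 2
      refine h3.trans ?_
      have h4 : (((N^(2^j)) 0 0 + (N^(2^j)) 1 1)/2)^2
          = ((N^(2^j)) 0 0 + (N^(2^j)) 1 1)^2/2/2 := by ring
      rw [h4]
      linarith
  -- step 2: trace/2 ≤ snorm
  have claim2 : ∀ j : ℕ, (t/2)^(2^j) ≤ snorm A₀ A₁ α (2^j * m) := by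
    intro j
    refine (claim j).trans ?_
    have h1 : (N^(2^j)) 0 0 ≤ mnorm (N^(2^j)) := entry_le_mnorm _ 0 0
    have h2 : (N^(2^j)) 1 1 ≤ mnorm (N^(2^j)) := entry_le_mnorm _ 1 1
    have h3 : mnorm (N^(2^j)) ≤ snorm A₀ A₁ α (2^j * m) := by
      rw [hN, wordProd_pow]
      have := mnorm_wordProd_le_snorm (A₀:=A₀) (A₁:=A₁) (α:=α) ((List.replicate (2^j) w).flatten)
      rwa [length_flatten_replicate] at this
    linarith
  -- step 3: take roots and pass to the limit
  have hϱ := tendsto_snorm_rpow A₀ A₁ α hA₀ htr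
  have hroot : ∀ j : ℕ, t/2 ≤ snorm A₀ A₁ α (2^j * m) ^ (1/((2^j : ℕ):ℝ)) := by
    intro j
    have h2j : (0:ℝ) < ((2^j : ℕ):ℝ) := by positivity
    have e : t/2 = ((t/2)^(2^j) : ℝ) ^ (1/((2^j : ℕ):ℝ)) := by
      rw [← Real.rpow_natCast (t/2) (2^j), ← Real.rpow_mul (by positivity), mul_one_div,
        div_self h2j.ne', Real.rpow_one]
    rw [e]
    exact Real.rpow_le_rpow (by positivity) (claim2 j) (by positivity)
  have hm0 : (m:ℝ) ≠ 0 := by positivity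
  have hRHS : ∀ j : ℕ, snorm A₀ A₁ α (2^j * m) ^ (1/((2^j : ℕ):ℝ))
      = (snorm A₀ A₁ α (2^j * m) ^ (1/((2^j * m : ℕ):ℝ)))^m := by
    intro j
    rw [← Real.rpow_natCast (snorm A₀ A₁ α (2^j * m) ^ (1/((2^j * m : ℕ):ℝ))) m,
      ← Real.rpow_mul (snorm_nonneg _)]
    congr 1
    have : ((2^j * m : ℕ):ℝ) = ((2^j : ℕ):ℝ) * (m:ℝ) := by push_cast; ring
    rw [this]
    field_simp
  have hnj : Tendsto (fun j : ℕ => 2^j * m) atTop atTop := by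
    apply tendsto_atTop_mono (fun j => ?_) tendsto_id
    calc (id j : ℕ) = j := rfl
    _ ≤ 2^j := (Nat.lt_two_pow_self).le
    _ ≤ 2^j * m := Nat.le_mul_of_pos_right _ (by omega)
  have htends : Tendsto (fun j : ℕ => (snorm A₀ A₁ α (2^j * m) ^ (1/((2^j * m : ℕ):ℝ)))^m)
      atTop (𝓝 (jsrα A₀ A₁ α ^ m)) := (hϱ.1.comp hnj).pow m
  have hfinal : t/2 ≤ jsrα A₀ A₁ α ^ m := by
    refine ge_of_tendsto htends (Eventually.of_forall fun j => ?_)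
    rw [← hRHS j]; exact hroot j
  linarith

lemma cube_le (c x y m : ℝ) (hc : 0 ≤ c) (hm : 0 ≤ m) (hx : c ≤ x) (hy : c ≤ y) :
    c^2*m ≤ x*m*y := by
  nlinarith [mul_nonneg (mul_nonneg (sub_nonneg.2 hx) hm) (sub_nonneg.2 hy),
    mul_nonneg (mul_nonneg hc hm) (sub_nonneg.2 hy),
    mul_nonneg (mul_nonneg (sub_nonneg.2 hx) hm) hc]

lemma sandwich {B M : M2} (c : ℝ) (hc : 0 ≤ c) (hB : ∀ i j, c ≤ B i j)
    (hM : ∀ i j, 0 ≤ M i j) (k l : Fin 2) : c^2 * M k l ≤ (B*M*B) 0 0 := by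
  have hBe : ∀ i j, 0 ≤ B i j := fun i j => le_trans hc (hB i j)
  have e : (B*M*B) 0 0 = (B 0 0 * M 0 0 + B 0 1 * M 1 0) * B 0 0
      + (B 0 0 * M 0 1 + B 0 1 * M 1 1) * B 1 0 := by
    simp [Matrix.mul_apply, Fin.sum_univ_two]
  rw [e]
  have n1 : c^2 * M 0 0 ≤ B 0 0 * M 0 0 * B 0 0 := cube_le c _ _ _ hc (hM 0 0) (hB 0 0) (hB 0 0)
  have n2 : c^2 * M 1 0 ≤ B 0 1 * M 1 0 * B 0 0 := cube_le c _ _ _ hc (hM 1 0) (hB 0 1) (hB 0 0)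
  have n3 : c^2 * M 0 1 ≤ B 0 0 * M 0 1 * B 1 0 := cube_le c _ _ _ hc (hM 0 1) (hB 0 0) (hB 1 0)
  have n4 : c^2 * M 1 1 ≤ B 0 1 * M 1 1 * B 1 0 := cube_le c _ _ _ hc (hM 1 1) (hB 0 1) (hB 1 0)
  have p1 : 0 ≤ B 0 0 * M 0 0 * B 0 0 := mul_nonneg (mul_nonneg (hBe 0 0) (hM 0 0)) (hBe 0 0)
  have p2 : 0 ≤ B 0 1 * M 1 0 * B 0 0 := mul_nonneg (mul_nonneg (hBe 0 1) (hM 1 0)) (hBe 0 0)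
  have p3 : 0 ≤ B 0 0 * M 0 1 * B 1 0 := mul_nonneg (mul_nonneg (hBe 0 0) (hM 0 1)) (hBe 1 0)
  have p4 : 0 ≤ B 0 1 * M 1 1 * B 1 0 := mul_nonneg (mul_nonneg (hBe 0 1) (hM 1 1)) (hBe 1 0)
  have h01 : k = 0 ∨ k = 1 := by omega
  have h01' : l = 0 ∨ l = 1 := by omega
  rcases h01 with rfl | rfl <;> rcases h01' with rfl | rfl <;> nlinarith

def bmin (A₀ A₁ : M2) : ℝ :=
  min (min ((A₁*A₀) 0 0) ((A₁*A₀) 0 1)) (min ((A₁*A₀) 1 0) ((A₁*A₀) 1 1))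

lemma bmin_le (i j : Fin 2) : bmin A₀ A₁ ≤ (A₁*A₀) i j := by
  have h01 : i = 0 ∨ i = 1 := by omega
  have h01' : j = 0 ∨ j = 1 := by omega
  unfold bmin
  rcases h01 with rfl | rfl <;> rcases h01' with rfl | rfl
  · exact (min_le_left _ _).trans (min_le_left _ _)
  · exact (min_le_left _ _).trans (min_le_right _ _)
  · exact (min_le_right _ _).trans (min_le_left _ _)
  · exact (min_le_right _ _).trans (min_le_right _ _)

lemma bmin_pos (hW : ∀ i j, 0 < (A₁*A₀) i j) : 0 < bmin A₀ A₁ := by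
  unfold bmin
  simp only [lt_min_iff]
  exact ⟨⟨hW 0 0, hW 0 1⟩, hW 1 0, hW 1 1⟩

lemma wordProd_zero_one : wordProd (pairα A₀ A₁ α) [0,1] = α • (A₁ * A₀) := by
  show ([pairα A₀ A₁ α 0, pairα A₀ A₁ α 1].reverse).prod = _
  simp only [List.reverse_cons, List.reverse_nil, List.nil_append, List.cons_append,
    List.prod_cons, List.prod_nil, mul_one, pair_zero, pair_one]
  rw [smul_mul_assoc]

theorem mnorm_wordProd_le_main (hA₀ : ∀ i j, 0 ≤ A₀ i j) (hA₁ : ∀ i j, 0 ≤ A₁ i j)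
    (htr : 0 < A₀.trace) (hW : ∀ i j, 0 < (A₁*A₀) i j) (hα : 0 < α) (u : List (Fin 2)) :
    mnorm (wordProd (pairα A₀ A₁ α) u)
      ≤ (4 * jsrα A₀ A₁ α ^ 4 / (α * bmin A₀ A₁)^2) * jsrα A₀ A₁ α ^ u.length := by
  set P := pairα A₀ A₁ α with hP
  set ϱ := jsrα A₀ A₁ α with hϱdef
  have hϱ : 0 < ϱ := jsr_pos A₀ A₁ α hA₀ htr
  set c := α * bmin A₀ A₁ with hcdef
  have hc : 0 < c := mul_pos hα (bmin_pos A₀ A₁ hW)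
  set B := wordProd P [0,1] with hBdef
  have hB : ∀ i j, c ≤ B i j := by
    intro i j
    rw [hBdef, hP, wordProd_zero_one, Matrix.smul_apply, smul_eq_mul, hcdef]
    exact mul_le_mul_of_nonneg_left (bmin_le A₀ A₁ i j) hα.le
  set M := wordProd P u with hMdef
  have hpnn := pair_entries_nonneg A₀ A₁ α hA₀ hA₁ hα.le
  have hM : ∀ i j, 0 ≤ M i j := wordProd_nonneg hpnn u
  set v : List (Fin 2) := [0,1] ++ (u ++ [0,1]) with hvdef
  have hv : wordProd P v = B * M * B := by
    rw [hvdef, wordProd_append, wordProd_append]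
  have hlen : v.length = u.length + 4 := by
    simp [hvdef]
  have hNnn : ∀ i j, 0 ≤ (B*M*B) i j := by
    rw [← hv]; exact wordProd_nonneg hpnn v
  have htr_le : (B*M*B) 0 0 + (B*M*B) 1 1 ≤ 2 * ϱ ^ (u.length + 4) := by
    have := trace_wordProd_le A₀ A₁ α hA₀ hA₁ htr hα.le v (by rw [hlen]; omega)
    rw [hv, hlen] at this
    exact this
  have hMb : ∀ k l, M k l ≤ 2 * ϱ^(u.length+4) / c^2 := by
    intro k l
    have h1 : c^2 * M k l ≤ (B*M*B) 0 0 := sandwich c hc.le hB hM k l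
    have h2 : (B*M*B) 0 0 ≤ 2*ϱ^(u.length+4) := by
      have := hNnn 1 1; linarith
    have hc2 : (0:ℝ) < c^2 := by positivity
    rw [le_div_iff₀ hc2]
    nlinarith [h1, h2]
  have hfin : mnorm M ≤ 2 * (2*ϱ^(u.length+4)/c^2) := by
    apply mnorm_le_of_entries _ (by positivity)
    intro i j
    rw [abs_of_nonneg (hM i j)]
    exact hMb i j
  calc mnorm M ≤ 2*(2*ϱ^(u.length+4)/c^2) := hfin
  _ = (4*ϱ^4/c^2) * ϱ^u.length := by rw [pow_add]; ring

lemma jsr_le_sone (hA₀ : ∀ i j, 0 ≤ A₀ i j) (htr : 0 < A₀.trace) (hα : 0 ≤ α) :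
    jsrα A₀ A₁ α ≤ mnorm A₀ + α * mnorm A₁ := by
  have hs1 : snorm A₀ A₁ α 1 ≤ mnorm A₀ + α * mnorm A₁ := by
    apply ciSup_le
    intro u
    have hprod : (List.ofFn fun i : Fin 1 => pairα A₀ A₁ α (u i)).prod = pairα A₀ A₁ α (u 0) := by
      simp [List.ofFn_succ]
    rw [hprod]
    have h01 : u 0 = 0 ∨ u 0 = 1 := by omega
    rcases h01 with h | h <;> rw [h]
    · rw [pair_zero]; nlinarith [mul_nonneg hα (mnorm_nonneg A₁)]
    · rw [pair_one, mnorm_smul α hα]; nlinarith [mnorm_nonneg A₀]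
  have hind : ∀ n : ℕ, 1 ≤ n → snorm A₀ A₁ α n ≤ snorm A₀ A₁ α 1 ^ n := by
    intro n hn
    induction n with
    | zero => omega
    | succ n ih =>
      rcases Nat.eq_zero_or_pos n with rfl | hn'
      · simp
      · calc snorm A₀ A₁ α (n+1) ≤ snorm A₀ A₁ α n * snorm A₀ A₁ α 1 := snorm_add_le n 1
        _ ≤ snorm A₀ A₁ α 1 ^ n * snorm A₀ A₁ α 1 :=
            mul_le_mul_of_nonneg_right (ih hn') (snorm_nonneg 1)
        _ = snorm A₀ A₁ α 1 ^ (n+1) := (pow_succ _ n).symm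
  have hev : ∀ᶠ n : ℕ in atTop, snorm A₀ A₁ α n ^ (1/(n:ℝ)) ≤ snorm A₀ A₁ α 1 := by
    filter_upwards [eventually_ge_atTop 1] with n hn
    have hne : ((n:ℕ):ℝ) ≠ 0 := by positivity
    have e : snorm A₀ A₁ α 1 = ((snorm A₀ A₁ α 1 ^ n : ℝ)) ^ (1/(n:ℝ)) := by
      rw [← Real.rpow_natCast (snorm A₀ A₁ α 1) n, ← Real.rpow_mul (snorm_nonneg 1),
        mul_one_div, div_self hne, Real.rpow_one]
    rw [e]
    exact Real.rpow_le_rpow (snorm_nonneg n) (hind n hn) (by positivity)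
  have h1 := (tendsto_snorm_rpow A₀ A₁ α hA₀ htr).1
  exact le_trans (le_of_tendsto h1 hev) hs1

/-! ### The adapted norm -/

def nset (A₀ A₁ : M2) (α : ℝ) (w : Fin 2 → ℝ) : Set ℝ :=
  {t | ∃ u : List (Fin 2),
    t = enorm2 ((wordProd (pairα A₀ A₁ α) u).mulVec w) / jsrα A₀ A₁ α ^ u.length}

def Nnorm (A₀ A₁ : M2) (α : ℝ) (w : Fin 2 → ℝ) : ℝ := sSup (nset A₀ A₁ α w)

variable {A₀ A₁ : M2} {α : ℝ}

lemma nset_nonempty (w : Fin 2 → ℝ) : (nset A₀ A₁ α w).Nonempty :=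
  ⟨_, [], rfl⟩

lemma enorm2_mem_nset (w : Fin 2 → ℝ) : enorm2 w ∈ nset A₀ A₁ α w := by
  refine ⟨[], ?_⟩
  rw [wordProd_nil, Matrix.one_mulVec, List.length_nil, pow_zero, div_one]

section withHyp

variable (hA₀ : ∀ i j, 0 ≤ A₀ i j) (hA₁ : ∀ i j, 0 ≤ A₁ i j)
  (htr : 0 < A₀.trace) (hW : ∀ i j, 0 < (A₁*A₀) i j) (hα : 0 < α)

include hA₀ hA₁ htr hW hα

lemma nset_le (w : Fin 2 → ℝ) :
    ∀ t ∈ nset A₀ A₁ α w, t ≤ (4 * jsrα A₀ A₁ α ^ 4 / (α * bmin A₀ A₁)^2) * enorm2 w := by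
  rintro t ⟨u, rfl⟩
  set ϱ := jsrα A₀ A₁ α with hϱdef
  have hϱ : 0 < ϱ := jsr_pos A₀ A₁ α hA₀ htr
  set C := 4 * ϱ ^ 4 / (α * bmin A₀ A₁)^2 with hC
  have hCpos : 0 < C := by
    rw [hC]
    have := bmin_pos A₀ A₁ hW
    positivity
  have h1 : enorm2 ((wordProd (pairα A₀ A₁ α) u).mulVec w)
      ≤ mnorm (wordProd (pairα A₀ A₁ α) u) * enorm2 w := enorm2_mulVec_le _ _
  have h2 : mnorm (wordProd (pairα A₀ A₁ α) u) ≤ C * ϱ ^ u.length :=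
    mnorm_wordProd_le_main A₀ A₁ α hA₀ hA₁ htr hW hα u
  have h3 : enorm2 ((wordProd (pairα A₀ A₁ α) u).mulVec w) ≤ C * ϱ ^ u.length * enorm2 w :=
    h1.trans (mul_le_mul_of_nonneg_right h2 (enorm2_nonneg w))
  rw [div_le_iff₀ (by positivity)]
  calc enorm2 ((wordProd (pairα A₀ A₁ α) u).mulVec w) ≤ C * ϱ ^ u.length * enorm2 w := h3
  _ = C * enorm2 w * ϱ ^ u.length := by ring

lemma nset_bddAbove (w : Fin 2 → ℝ) : BddAbove (nset A₀ A₁ α w) :=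
  ⟨_, fun t ht => nset_le hA₀ hA₁ htr hW hα w t ht⟩

lemma enorm2_le_Nnorm (w : Fin 2 → ℝ) : enorm2 w ≤ Nnorm A₀ A₁ α w :=
  le_csSup (nset_bddAbove hA₀ hA₁ htr hW hα w) (enorm2_mem_nset w)

lemma Nnorm_nonneg (w : Fin 2 → ℝ) : 0 ≤ Nnorm A₀ A₁ α w :=
  (enorm2_nonneg w).trans (enorm2_le_Nnorm hA₀ hA₁ htr hW hα w)

lemma Nnorm_le_C (w : Fin 2 → ℝ) :
    Nnorm A₀ A₁ α w ≤ (4 * jsrα A₀ A₁ α ^ 4 / (α * bmin A₀ A₁)^2) * enorm2 w :=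
  csSup_le (nset_nonempty w) (nset_le hA₀ hA₁ htr hW hα w)

lemma term_le_Nnorm (w : Fin 2 → ℝ) (u : List (Fin 2)) :
    enorm2 ((wordProd (pairα A₀ A₁ α) u).mulVec w) / jsrα A₀ A₁ α ^ u.length
      ≤ Nnorm A₀ A₁ α w :=
  le_csSup (nset_bddAbove hA₀ hA₁ htr hW hα w) ⟨u, rfl⟩

lemma Nnorm_zero : Nnorm A₀ A₁ α 0 = 0 := by
  apply le_antisymm
  · apply csSup_le (nset_nonempty 0)
    rintro t ⟨u, rfl⟩
    rw [Matrix.mulVec_zero]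
    have : enorm2 (0 : Fin 2 → ℝ) = 0 := by simp [enorm2]
    rw [this, zero_div]
  · have h := enorm2_le_Nnorm hA₀ hA₁ htr hW hα (0 : Fin 2 → ℝ)
    have : enorm2 (0 : Fin 2 → ℝ) = 0 := by simp [enorm2]
    linarith [this ▸ h]

lemma Nnorm_eq_zero_iff (w : Fin 2 → ℝ) : Nnorm A₀ A₁ α w = 0 ↔ w = 0 := by
  constructor
  · intro h
    have h1 := enorm2_le_Nnorm hA₀ hA₁ htr hW hα w
    rw [h] at h1
    exact enorm2_eq_zero (le_antisymm h1 (enorm2_nonneg w))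
  · rintro rfl
    exact Nnorm_zero hA₀ hA₁ htr hW hα

lemma Nnorm_add_le (w₁ w₂ : Fin 2 → ℝ) :
    Nnorm A₀ A₁ α (w₁ + w₂) ≤ Nnorm A₀ A₁ α w₁ + Nnorm A₀ A₁ α w₂ := by
  apply csSup_le (nset_nonempty _)
  rintro t ⟨u, rfl⟩
  have hϱ : 0 < jsrα A₀ A₁ α := jsr_pos A₀ A₁ α hA₀ htr
  have hpow : (0:ℝ) < jsrα A₀ A₁ α ^ u.length := by positivity
  rw [Matrix.mulVec_add]
  calc enorm2 ((wordProd (pairα A₀ A₁ α) u).mulVec w₁ + (wordProd (pairα A₀ A₁ α) u).mulVec w₂)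
        / jsrα A₀ A₁ α ^ u.length
      ≤ (enorm2 ((wordProd (pairα A₀ A₁ α) u).mulVec w₁)
        + enorm2 ((wordProd (pairα A₀ A₁ α) u).mulVec w₂)) / jsrα A₀ A₁ α ^ u.length :=
      (div_le_div_iff_of_pos_right hpow).2 (enorm2_add_le _ _)
  _ = enorm2 ((wordProd (pairα A₀ A₁ α) u).mulVec w₁) / jsrα A₀ A₁ α ^ u.length
        + enorm2 ((wordProd (pairα A₀ A₁ α) u).mulVec w₂) / jsrα A₀ A₁ α ^ u.length :=
      add_div _ _ _
  _ ≤ _ := add_le_add (term_le_Nnorm hA₀ hA₁ htr hW hα w₁ u)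
      (term_le_Nnorm hA₀ hA₁ htr hW hα w₂ u)

lemma Nnorm_smul (c : ℝ) (w : Fin 2 → ℝ) :
    Nnorm A₀ A₁ α (c • w) = |c| * Nnorm A₀ A₁ α w := by
  rcases eq_or_ne c 0 with rfl | hc
  · rw [zero_smul, Nnorm_zero hA₀ hA₁ htr hW hα, abs_zero, zero_mul]
  · have hcpos : 0 < |c| := abs_pos.2 hc
    apply le_antisymm
    · apply csSup_le (nset_nonempty _)
      rintro t ⟨u, rfl⟩
      rw [Matrix.mulVec_smul, enorm2_smul, mul_div_assoc]
      exact mul_le_mul_of_nonneg_left (term_le_Nnorm hA₀ hA₁ htr hW hα w u) (abs_nonneg c)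
    · rw [← le_div_iff₀' hcpos]
      apply csSup_le (nset_nonempty _)
      rintro t ⟨u, rfl⟩
      rw [le_div_iff₀' hcpos]
      have : |c| * (enorm2 ((wordProd (pairα A₀ A₁ α) u).mulVec w) / jsrα A₀ A₁ α ^ u.length)
          = enorm2 ((wordProd (pairα A₀ A₁ α) u).mulVec (c • w)) / jsrα A₀ A₁ α ^ u.length := by
        rw [Matrix.mulVec_smul, enorm2_smul, mul_div_assoc]
      rw [this]
      exact term_le_Nnorm hA₀ hA₁ htr hW hα (c • w) u

lemma Nnorm_mulVec_le (i : Fin 2) (w : Fin 2 → ℝ) :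
    Nnorm A₀ A₁ α ((pairα A₀ A₁ α i).mulVec w) ≤ jsrα A₀ A₁ α * Nnorm A₀ A₁ α w := by
  have hϱ : 0 < jsrα A₀ A₁ α := jsr_pos A₀ A₁ α hA₀ htr
  apply csSup_le (nset_nonempty _)
  rintro t ⟨u, rfl⟩
  have hmv : (wordProd (pairα A₀ A₁ α) u).mulVec ((pairα A₀ A₁ α i).mulVec w)
      = (wordProd (pairα A₀ A₁ α) (i :: u)).mulVec w := by
    rw [wordProd_cons, ← Matrix.mulVec_mulVec]
  rw [hmv]
  have hlen : (i :: u).length = u.length + 1 := rfl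
  have heq : enorm2 ((wordProd (pairα A₀ A₁ α) (i :: u)).mulVec w) / jsrα A₀ A₁ α ^ u.length
      = jsrα A₀ A₁ α * (enorm2 ((wordProd (pairα A₀ A₁ α) (i :: u)).mulVec w)
        / jsrα A₀ A₁ α ^ (i :: u).length) := by
    rw [hlen, pow_succ]
    field_simp
  rw [heq]
  exact mul_le_mul_of_nonneg_left (term_le_Nnorm hA₀ hA₁ htr hW hα w (i :: u)) hϱ.le

end withHyp

end AdaptedNormsAux

/-- Lemma `nf`: existence of a family of adapted norms `‖·‖_α` on `ℝ²` with
`‖A_i^{(α)} v‖_α ≤ ϱ(α)‖v‖_α`, uniformly comparable to the Euclidean norm on compact subsets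
of `(0,∞)`. -/
theorem exists_adapted_norms (A₀ A₁ : M2) (r : ℝ → ℝ)
    (hT : TechnicalHyp A₀ A₁) (hS : SturmianHyp A₀ A₁ r) :
    ∃ N : ℝ → (Fin 2 → ℝ) → ℝ,
      (∀ α : ℝ, 0 < α →
        (∀ w : Fin 2 → ℝ, N α w = 0 ↔ w = 0) ∧
        (∀ w₁ w₂ : Fin 2 → ℝ, N α (w₁ + w₂) ≤ N α w₁ + N α w₂) ∧
        (∀ (c : ℝ) (w : Fin 2 → ℝ), N α (c • w) = |c| * N α w)) ∧
      (∀ α : ℝ, 0 < α → ∀ i : Fin 2, ∀ w : Fin 2 → ℝ,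
        N α ((pairα A₀ A₁ α i).mulVec w) ≤ jsrα A₀ A₁ α * N α w) ∧
      (∀ K : Set ℝ, IsCompact K → K ⊆ Set.Ioi 0 →
        ∃ C : ℝ, 1 < C ∧ ∀ w : Fin 2 → ℝ, ∀ α ∈ K,
          enorm2 w ≤ C * N α w ∧ C * N α w ≤ C ^ 2 * enorm2 w) := by
  have hA₀ := hT.nonneg₀
  have hA₁ := hT.nonneg₁
  have htr := hT.posTrace₀
  have hW : ∀ i j, 0 < (A₁*A₀) i j := by
    intro i j
    have h := hT.posEntries [0,1] (by simp) (by simp) i j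
    have e : wordProd ![A₀,A₁] [0,1] = A₁ * A₀ := by
      show ([![A₀,A₁] 0, ![A₀,A₁] 1].reverse).prod = _
      simp
    rwa [e] at h
  refine ⟨fun α => AdaptedNormsAux.Nnorm A₀ A₁ α, ?_, ?_, ?_⟩
  · intro α hα
    exact ⟨fun w => AdaptedNormsAux.Nnorm_eq_zero_iff hA₀ hA₁ htr hW hα w,
      fun w₁ w₂ => AdaptedNormsAux.Nnorm_add_le hA₀ hA₁ htr hW hα w₁ w₂,
      fun c w => AdaptedNormsAux.Nnorm_smul hA₀ hA₁ htr hW hα c w⟩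
  · intro α hα i w
    exact AdaptedNormsAux.Nnorm_mulVec_le hA₀ hA₁ htr hW hα i w
  · intro K hK hKsub
    rcases K.eq_empty_or_nonempty with rfl | hne
    · exact ⟨2, one_lt_two, fun w α hα => absurd hα (Set.notMem_empty α)⟩
    · have hbdd_b := hK.bddBelow
      have hbdd_a := hK.bddAbove
      have hα₀mem := hK.sInf_mem hne
      have hᾱmem := hK.sSup_mem hne
      set α₀ := sInf K with hα₀def
      set ᾱ := sSup K with hᾱdef
      have hα₀pos : 0 < α₀ := hKsub hα₀mem
      have hᾱpos : 0 < ᾱ := hKsub hᾱmem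
      have hb : 0 < AdaptedNormsAux.bmin A₀ A₁ := AdaptedNormsAux.bmin_pos A₀ A₁ hW
      set D := mnorm A₀ + ᾱ * mnorm A₁ with hDdef
      have hD : 0 < D := lt_of_lt_of_le (AdaptedNormsAux.jsr_pos A₀ A₁ ᾱ hA₀ htr)
        (AdaptedNormsAux.jsr_le_sone A₀ A₁ ᾱ hA₀ htr hᾱpos.le)
      set CK := 4 * D^4 / (α₀ * AdaptedNormsAux.bmin A₀ A₁)^2 with hCKdef
      have hCK : 0 < CK := by positivity
      set C := max (CK+1) 2 with hCdef
      have hC2 : (2:ℝ) ≤ C := le_max_right _ _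
      have hC1 : (1:ℝ) ≤ C := by linarith
      have hCpos : (0:ℝ) < C := by linarith
      have hCKC : CK ≤ C := le_trans (by linarith) (le_max_left _ _)
      refine ⟨C, by linarith, ?_⟩
      intro w α hα
      have hαpos : 0 < α := hKsub hα
      have hNge := AdaptedNormsAux.enorm2_le_Nnorm hA₀ hA₁ htr hW hαpos w
      have hNnn := AdaptedNormsAux.Nnorm_nonneg hA₀ hA₁ htr hW hαpos w
      constructor
      · calc enorm2 w ≤ AdaptedNormsAux.Nnorm A₀ A₁ α w := hNge
        _ ≤ C * AdaptedNormsAux.Nnorm A₀ A₁ α w := le_mul_of_one_le_left hNnn hC1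
      · have hϱα : 0 < jsrα A₀ A₁ α := AdaptedNormsAux.jsr_pos A₀ A₁ α hA₀ htr
        have hϱD : jsrα A₀ A₁ α ≤ D := by
          refine (AdaptedNormsAux.jsr_le_sone A₀ A₁ α hA₀ htr hαpos.le).trans ?_
          rw [hDdef]
          have : α * mnorm A₁ ≤ ᾱ * mnorm A₁ :=
            mul_le_mul_of_nonneg_right (le_csSup hbdd_a hα) (AdaptedNormsAux.mnorm_nonneg A₁)
          linarith
        have hNC : AdaptedNormsAux.Nnorm A₀ A₁ α w ≤ CK * enorm2 w := by
          refine (AdaptedNormsAux.Nnorm_le_C hA₀ hA₁ htr hW hαpos w).trans ?_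
          apply mul_le_mul_of_nonneg_right _ (AdaptedNormsAux.enorm2_nonneg w)
          rw [hCKdef]
          apply div_le_div₀ (by positivity) _ (by positivity) _
          · have := pow_le_pow_left₀ hϱα.le hϱD 4
            linarith
          · apply pow_le_pow_left₀ (by positivity)
            exact mul_le_mul_of_nonneg_right (csInf_le hbdd_b hα) hb.le
        calc C * AdaptedNormsAux.Nnorm A₀ A₁ α w ≤ C * (CK * enorm2 w) :=
            mul_le_mul_of_nonneg_left hNC hCpos.le
        _ ≤ C * (C * enorm2 w) := mul_le_mul_of_nonneg_left
            (mul_le_mul_of_nonneg_right hCKC (AdaptedNormsAux.enorm2_nonneg w)) hCpos.le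
        _ = C ^ 2 * enorm2 w := by ring
end
end

section
/- Let |||·||| be a norm on ℝ², let B be a real 2×2 matrix with operator norm |||B||| ≤ 1 (with respect to |||·|||), and let v ∈ ℝ² with |||v||| = 1. Let C > 1 be any constant such that C^{−1}‖u‖ ≤ |||u||| ≤ C‖u‖ for all u ∈ ℝ², where ‖·‖ denotes the Euclidean norm. Then 1 − 2C²√(|||Bv − v|||) ≤ ρ(B) ≤ 1, where ρ(B) denotes the spectral radius of B (the maximum modulus of its complex eigenvalues). -/
open Filter Matrix Set Topology

noncomputable section

lemma cross_det (M : Matrix (Fin 2) (Fin 2) ℝ) (w : Fin 2 → ℝ) :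
    |M.det| * (w 0 ^ 2 + w 1 ^ 2) ≤ enorm2 (M.mulVec w) * enorm2 (M.mulVec ![-w 1, w 0]) := by
  set a := M.mulVec w with ha
  set b := M.mulVec ![-w 1, w 0] with hb
  have key : M.det * (w 0 ^ 2 + w 1 ^ 2) = a 0 * b 1 - a 1 * b 0 := by
    simp [ha, hb, Matrix.mulVec, Matrix.det_fin_two, Fin.sum_univ_two, dotProduct]
    ring
  have h1 : |M.det * (w 0 ^ 2 + w 1 ^ 2)| ≤ enorm2 a * enorm2 b := by
    rw [key, enorm2, enorm2, ← Real.sqrt_mul (add_nonneg (sq_nonneg _) (sq_nonneg _)),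
      ← Real.sqrt_sq_eq_abs]
    apply Real.sqrt_le_sqrt
    nlinarith [sq_nonneg (a 0 * b 0 + a 1 * b 1)]
  calc |M.det| * (w 0 ^ 2 + w 1 ^ 2)
      = |M.det * (w 0 ^ 2 + w 1 ^ 2)| := by
        rw [abs_mul, abs_of_nonneg (show (0:ℝ) ≤ w 0 ^ 2 + w 1 ^ 2 by positivity)]
    _ ≤ _ := h1

lemma mem_spec_fin_two (A : Matrix (Fin 2) (Fin 2) ℂ) (z : ℂ) :
    z ∈ spectrum ℂ A ↔ z ^ 2 - A.trace * z + A.det = 0 := by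
  rw [spectrum.mem_iff, Matrix.isUnit_iff_isUnit_det, isUnit_iff_ne_zero, not_ne_iff]
  constructor <;> intro h
  · rw [← h]
    simp [Matrix.det_fin_two, Matrix.trace_fin_two, Matrix.algebraMap_matrix_apply]
    ring
  · rw [show Matrix.det _ = z ^ 2 - A.trace * z + A.det from ?_, h]
    simp [Matrix.det_fin_two, Matrix.trace_fin_two, Matrix.algebraMap_matrix_apply]
    ring

set_option maxHeartbeats 1000000 in
/-- Lemma `elenmmna`: if `|||·|||` is a norm on `ℝ²`, `B` has operator norm at
most `1` with respect to it, `|||v||| = 1`, and `C > 1` satisfies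
`C⁻¹‖u‖ ≤ |||u||| ≤ C‖u‖` for the Euclidean norm `‖·‖`, then
`1 − 2C²√(|||Bv − v|||) ≤ ρ(B) ≤ 1`. -/
theorem spectral_radius_almost_fixed_vector
    (N : (Fin 2 → ℝ) → ℝ)
    (hN0 : ∀ w : Fin 2 → ℝ, N w = 0 ↔ w = 0)
    (hNadd : ∀ w₁ w₂ : Fin 2 → ℝ, N (w₁ + w₂) ≤ N w₁ + N w₂)
    (hNsmul : ∀ (c : ℝ) (w : Fin 2 → ℝ), N (c • w) = |c| * N w)
    (B : M2) (hB : ∀ w : Fin 2 → ℝ, N (B.mulVec w) ≤ N w)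
    (v : Fin 2 → ℝ) (hv : N v = 1)
    (C : ℝ) (hC : 1 < C)
    (hcomp : ∀ w : Fin 2 → ℝ, C⁻¹ * enorm2 w ≤ N w ∧ N w ≤ C * enorm2 w) :
    1 - 2 * C ^ 2 * Real.sqrt (N (B.mulVec v - v)) ≤ specRad B ∧ specRad B ≤ 1 := by
  have hC0 : (0:ℝ) < C := lt_trans one_pos hC
  have hCi : (0:ℝ) < C⁻¹ := inv_pos.2 hC0
  have hen : ∀ w, 0 ≤ enorm2 w := fun w => Real.sqrt_nonneg _
  have hNnn : ∀ w, 0 ≤ N w := fun w =>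
    le_trans (mul_nonneg hCi.le (hen w)) (hcomp w).1
  have henle : ∀ w, enorm2 w ≤ C * N w := by
    intro w
    have h := (hcomp w).1
    calc enorm2 w = C * (C⁻¹ * enorm2 w) := by field_simp
      _ ≤ C * N w := by nlinarith
  have hNneg : ∀ w, N (-w) = N w := by
    intro w
    have := hNsmul (-1) w
    simpa using this
  -- Euclidean size of v
  have hev1 : enorm2 v ≤ C := by
    have := (hcomp v).1; rw [hv] at this
    calc enorm2 v = C * (C⁻¹ * enorm2 v) := by field_simp
      _ ≤ C * 1 := by nlinarith
      _ = C := mul_one C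
  have hev2 : C⁻¹ ≤ enorm2 v := by
    have h1 : 1 ≤ C * enorm2 v := by have h := (hcomp v).2; rwa [hv] at h
    calc C⁻¹ = C⁻¹ * 1 := (mul_one _).symm
      _ ≤ C⁻¹ * (C * enorm2 v) := by nlinarith
      _ = enorm2 v := by field_simp
  have hevpos : 0 < enorm2 v := lt_of_lt_of_le hCi hev2
  have hevsq : enorm2 v ^ 2 = v 0 ^ 2 + v 1 ^ 2 :=
    Real.sq_sqrt (by positivity)
  set vp : Fin 2 → ℝ := ![-v 1, v 0] with hvp
  have hevp : enorm2 vp = enorm2 v := by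
    simp [enorm2, hvp]
    ring_nf
  -- iterated products
  have hNpow : ∀ (n : ℕ) (w : Fin 2 → ℝ), N ((B ^ n).mulVec w) ≤ N w := by
    intro n
    induction n with
    | zero => intro w; simp [Matrix.one_mulVec]
    | succ n ih =>
      intro w
      rw [pow_succ, ← Matrix.mulVec_mulVec]
      exact le_trans (ih _) (hB w)
  -- determinant bound
  have hdet1 : |B.det| ≤ 1 := by
    by_contra h
    push_neg at h
    obtain ⟨n, hn⟩ := pow_unbounded_of_one_lt (C ^ 6) h
    have h1 : |B.det| ^ n * (v 0 ^ 2 + v 1 ^ 2) ≤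
        enorm2 ((B ^ n).mulVec v) * enorm2 ((B ^ n).mulVec vp) := by
      have := cross_det (B ^ n) v
      rwa [Matrix.det_pow, abs_pow] at this
    have h2 : enorm2 ((B ^ n).mulVec v) ≤ C := by
      calc enorm2 ((B ^ n).mulVec v) ≤ C * N ((B ^ n).mulVec v) := henle _
        _ ≤ C * N v := by nlinarith [hNpow n v]
        _ = C := by rw [hv, mul_one]
    have h3 : enorm2 ((B ^ n).mulVec vp) ≤ C ^ 3 := by
      calc enorm2 ((B ^ n).mulVec vp) ≤ C * N ((B ^ n).mulVec vp) := henle _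
        _ ≤ C * N vp := by nlinarith [hNpow n vp]
        _ ≤ C * (C * enorm2 vp) := by nlinarith [(hcomp vp).2]
        _ = C ^ 2 * enorm2 v := by rw [hevp]; ring
        _ ≤ C ^ 2 * C := by nlinarith
        _ = C ^ 3 := by ring
    have h4 : C⁻¹ ^ 2 ≤ v 0 ^ 2 + v 1 ^ 2 := by
      rw [← hevsq]; nlinarith
    have h5 : |B.det| ^ n * C⁻¹ ^ 2 ≤ C ^ 4 := by
      have hpnn : (0:ℝ) ≤ |B.det| ^ n := pow_nonneg (abs_nonneg _) _
      calc |B.det| ^ n * C⁻¹ ^ 2 ≤ |B.det| ^ n * (v 0 ^ 2 + v 1 ^ 2) := by nlinarith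
        _ ≤ enorm2 ((B ^ n).mulVec v) * enorm2 ((B ^ n).mulVec vp) := h1
        _ ≤ C * C ^ 3 := mul_le_mul h2 h3 (hen _) hC0.le
        _ = C ^ 4 := by ring
    have h6 : |B.det| ^ n ≤ C ^ 6 := by
      have : |B.det| ^ n = (|B.det| ^ n * C⁻¹ ^ 2) * C ^ 2 := by field_simp
      rw [this]
      calc (|B.det| ^ n * C⁻¹ ^ 2) * C ^ 2 ≤ C ^ 4 * C ^ 2 := by nlinarith
        _ = C ^ 6 := by ring
    linarith
  -- the complexification and its spectrum
  set Ac : Matrix (Fin 2) (Fin 2) ℂ := B.map (fun x => (x : ℂ)) with hAc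
  have hAtr : Ac.trace = (B.trace : ℂ) := by
    simp [hAc, Matrix.trace_fin_two, Matrix.map_apply]
  have hAdet : Ac.det = (B.det : ℂ) := by
    simp [hAc, Matrix.det_fin_two, Matrix.map_apply]
  have hspec : ∀ z : ℂ, z ∈ spectrum ℂ Ac ↔
      z ^ 2 - (B.trace : ℂ) * z + (B.det : ℂ) = 0 := by
    intro z
    rw [mem_spec_fin_two, hAtr, hAdet]
  -- every spectral value has modulus at most 1
  have habs : ∀ z ∈ spectrum ℂ Ac, ‖z‖ ≤ 1 := by
    intro z hz
    rw [hspec] at hz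
    by_cases him : z.im = 0
    · -- real eigenvalue
      set x : ℝ := z.re with hx
      have hzx : z = (x : ℂ) := by
        apply Complex.ext <;> simp [hx, him]
      rw [hzx] at hz
      have hzr : x ^ 2 - B.trace * x + B.det = 0 := by
        exact_mod_cast hz
      have hdet0 : (x • (1 : M2) - B).det = 0 := by
        have : (x • (1 : M2) - B).det = x ^ 2 - B.trace * x + B.det := by
          simp [Matrix.det_fin_two, Matrix.trace_fin_two, Matrix.one_apply]
          ring
        rw [this, hzr]
      obtain ⟨w, hw0, hww⟩ := (Matrix.exists_mulVec_eq_zero_iff).2 hdet0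
      have hBw : B.mulVec w = x • w := by
        rw [Matrix.sub_mulVec, Matrix.smul_mulVec, Matrix.one_mulVec, sub_eq_zero] at hww
        exact hww.symm
      have hNw : 0 < N w := by
        rcases lt_or_eq_of_le (hNnn w) with h | h
        · exact h
        · exact absurd ((hN0 w).1 h.symm) hw0
      have := hB w
      rw [hBw, hNsmul] at this
      have hxle : |x| ≤ 1 := by nlinarith
      rw [hzx, Complex.norm_real, Real.norm_eq_abs]
      exact hxle
    · -- genuinely complex eigenvalue
      set t : ℂ := (B.trace : ℂ)
      set d : ℂ := (B.det : ℂ)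
      have hconj : (starRingEnd ℂ z) ^ 2 - t * (starRingEnd ℂ z) + d = 0 := by
        have h := congrArg (starRingEnd ℂ) hz
        simpa [map_sub, map_add, _root_.map_mul, map_pow, Complex.conj_ofReal, t, d] using h
      have hne : z - starRingEnd ℂ z ≠ 0 := by
        intro h
        rw [sub_eq_zero] at h
        exact him (Complex.conj_eq_iff_im.1 h.symm)
      have h3 : (z - starRingEnd ℂ z) * (z + starRingEnd ℂ z - t) = 0 := by
        linear_combination hz - hconj
      have hsum : z + starRingEnd ℂ z = t := by
        rcases mul_eq_zero.1 h3 with h | h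
        · exact absurd h hne
        · exact sub_eq_zero.1 h
      have hzd : z * starRingEnd ℂ z = d := by
        linear_combination (-1 : ℂ) * hz + z * hsum
      rw [Complex.mul_conj] at hzd
      rw [show d = ((B.det : ℝ) : ℂ) from rfl] at hzd
      have hnsq : Complex.normSq z = B.det := by
        exact_mod_cast hzd
      have habs2 : ‖z‖ ^ 2 = B.det := by
        rw [← hnsq, Complex.sq_norm]
      nlinarith [norm_nonneg z, abs_le.1 hdet1]
  -- the two eigenvalues
  obtain ⟨s, hs⟩ := IsAlgClosed.exists_pow_nat_eq ((B.trace : ℂ) ^ 2 - 4 * B.det) zero_lt_two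
  set l1 : ℂ := ((B.trace : ℂ) + s) / 2 with hl1
  set l2 : ℂ := ((B.trace : ℂ) - s) / 2 with hl2
  have hm1 : l1 ∈ spectrum ℂ Ac := (hspec l1).2 (by rw [hl1]; linear_combination hs / 4)
  have hm2 : l2 ∈ spectrum ℂ Ac := (hspec l2).2 (by rw [hl2]; linear_combination hs / 4)
  have hbdd : BddAbove ((fun z : ℂ => ‖z‖) '' spectrum ℂ Ac) :=
    ⟨1, by rintro _ ⟨z, hz, rfl⟩; exact habs z hz⟩
  have hnem : ((fun z : ℂ => ‖z‖) '' spectrum ℂ Ac).Nonempty := ⟨_, ⟨l1, hm1, rfl⟩⟩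
  have hsr : specRad B = sSup ((fun z : ℂ => ‖z‖) '' spectrum ℂ Ac) := by
    rw [specRad, hAc]
  have hupper : specRad B ≤ 1 := by
    rw [hsr]
    exact csSup_le hnem (by rintro _ ⟨z, hz, rfl⟩; exact habs z hz)
  refine ⟨?_, hupper⟩
  -- lower bound
  set ε := N (B.mulVec v - v) with hεdef
  have hεnn : 0 ≤ ε := hNnn _
  have hdet1B : ((1 : M2) - B).det = 1 - B.trace + B.det := by
    simp [Matrix.det_fin_two, Matrix.trace_fin_two, Matrix.sub_apply, Matrix.one_apply]
    ring
  have hprod : (1 - l1) * (1 - l2) = ((1 - B.trace + B.det : ℝ) : ℂ) := by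
    push_cast
    rw [hl1, hl2]
    linear_combination -hs / 4
  have habsprod : ‖1 - l1‖ * ‖1 - l2‖ = |1 - B.trace + B.det| := by
    rw [← norm_mul, hprod, Complex.norm_real, Real.norm_eq_abs]
  -- Hadamard bound on det (1 - B)
  have e1 : ((1 : M2) - B).mulVec v = v - B.mulVec v := by
    rw [Matrix.sub_mulVec, Matrix.one_mulVec]
  have e2 : ((1 : M2) - B).mulVec vp = vp - B.mulVec vp := by
    rw [Matrix.sub_mulVec, Matrix.one_mulVec]
  have f1 : enorm2 (v - B.mulVec v) ≤ C * ε := by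
    have hNv : N (v - B.mulVec v) = ε := by
      rw [show v - B.mulVec v = -(B.mulVec v - v) by abel, hNneg, hεdef]
    calc enorm2 (v - B.mulVec v) ≤ C * N (v - B.mulVec v) := henle _
      _ = C * ε := by rw [hNv]
  have f2 : enorm2 (vp - B.mulVec vp) ≤ 2 * C ^ 2 * enorm2 v := by
    have g1 : N (vp - B.mulVec vp) ≤ 2 * N vp := by
      have h1 := hNadd vp (-(B.mulVec vp))
      rw [hNneg] at h1
      have h2 := hB vp
      calc N (vp - B.mulVec vp) = N (vp + -(B.mulVec vp)) := by rw [sub_eq_add_neg]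
        _ ≤ N vp + N (B.mulVec vp) := h1
        _ ≤ 2 * N vp := by linarith
    calc enorm2 (vp - B.mulVec vp) ≤ C * N (vp - B.mulVec vp) := henle _
      _ ≤ C * (2 * N vp) := mul_le_mul_of_nonneg_left g1 hC0.le
      _ ≤ C * (2 * (C * enorm2 vp)) := by
          have h3 := (hcomp vp).2
          gcongr
      _ = 2 * C ^ 2 * enorm2 v := by rw [hevp]; ring
  have hc := cross_det ((1 : M2) - B) v
  rw [hdet1B, e1, ← hvp, e2] at hc
  have hstep : |1 - B.trace + B.det| * enorm2 v ^ 2 ≤ C * ε * (2 * C ^ 2 * enorm2 v) := by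
    rw [hevsq]
    calc |1 - B.trace + B.det| * (v 0 ^ 2 + v 1 ^ 2)
        ≤ enorm2 (v - B.mulVec v) * enorm2 (vp - B.mulVec vp) := hc
      _ ≤ C * ε * (2 * C ^ 2 * enorm2 v) :=
        mul_le_mul f1 f2 (hen _) (by positivity)
  have hce : 1 ≤ C * enorm2 v := by
    calc (1:ℝ) = C * C⁻¹ := by field_simp
      _ ≤ C * enorm2 v := by nlinarith
  have hdelta : |1 - B.trace + B.det| ≤ 2 * C ^ 4 * ε := by
    have hstep2 : |1 - B.trace + B.det| * enorm2 v ≤ 2 * C ^ 3 * ε := by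
      have := mul_le_mul_of_nonneg_right hstep (le_of_lt hevpos)
      have hev3 : 0 < enorm2 v ^ 2 := by positivity
      nlinarith [abs_nonneg (1 - B.trace + B.det), hevpos]
    nlinarith [mul_le_mul_of_nonneg_left hstep2 hC0.le,
      mul_le_mul_of_nonneg_left hce (abs_nonneg (1 - B.trace + B.det)), hεnn, hC0]
  set K := 2 * C ^ 2 * Real.sqrt ε with hK
  have hKnn : 0 ≤ K := by positivity
  have hK2 : K ^ 2 = 4 * C ^ 4 * ε := by
    rw [hK, mul_pow, mul_pow, Real.sq_sqrt hεnn]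
    ring
  have hmin : ‖1 - l1‖ ≤ K ∨ ‖1 - l2‖ ≤ K := by
    by_contra hcon
    push_neg at hcon
    have h1 : K * K < ‖1 - l1‖ * ‖1 - l2‖ :=
      mul_lt_mul'' hcon.1 hcon.2 hKnn hKnn
    rw [habsprod] at h1
    nlinarith [hεnn, pow_pos hC0 4]
  rcases hmin with h | h
  · have htri := norm_add_le l1 (1 - l1)
    simp only [add_sub_cancel, norm_one] at htri
    have hle : ‖l1‖ ≤ specRad B := by
      rw [hsr]; exact le_csSup hbdd ⟨l1, hm1, rfl⟩
    linarith
  · have htri := norm_add_le l2 (1 - l2)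
    simp only [add_sub_cancel, norm_one] at htri
    have hle : ‖l2‖ ≤ specRad B := by
      rw [hsr]; exact le_csSup hbdd ⟨l2, hm2, rfl⟩
    linarith
end
end
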